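/- arXiv:1510.05038 — 8 statements merged into one kernel-verified Lean document; each statement's English description precedes it below -/
import Mathlib

section
/- For all n ≥ 0 and l with l ≢ n (mod 2), the alternating convolution of unsigned Stirling numbers of the first kind vanishes: ∑_{k=0}^{n} C(n,k) ∑_{i+j=l} (-1)^{k+1-j} c(n-k+1,i) c(k+1,j) = 0. -/
open Finset Polynomial

/-- Number of cycles (including fixed points) of a permutation of a finite type. -/
def cycleCount {α : Type*} [Fintype α] [DecidableEq α] (σ : Equiv.Perm α) : ℕ :=
  Multiset.card σ.cycleType + (Fintype.card α - σ.cycleType.sum)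

/-- Unsigned Stirling number of the first kind: the number of permutations of an
`m`-element set with exactly `i` cycles. -/
noncomputable def stirC (m i : ℕ) : ℕ :=
  Nat.card {σ : Equiv.Perm (Fin m) // cycleCount σ = i}

/-- `O(m, g)`: the number of permutations of an `m`-element set all of whose cycles
are odd and which have exactly `m - 2g` cycles. -/
noncomputable def oddCyclePermCount (m : ℕ) (g : ℤ) : ℕ :=
  Nat.card {σ : Equiv.Perm (Fin m) //
    (∀ l ∈ σ.cycleType, Odd l) ∧ (cycleCount σ : ℤ) = (m : ℤ) - 2 * g}

lemma sign_flip (a b : ℤ) (h : Odd (a + b)) : (-1 : ℚ) ^ a = -(-1 : ℚ) ^ b := by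
  have h1 : (-1 : ℚ) ^ (a + b) = -1 := h.neg_one_zpow
  have h2 : (-1 : ℚ) ^ a * (-1 : ℚ) ^ b = -1 := by
    rw [← zpow_add₀ (by norm_num : (-1:ℚ) ≠ 0)]; exact h1
  have h3 : (-1 : ℚ) ^ b * (-1 : ℚ) ^ b = 1 := by
    rw [← zpow_add₀ (by norm_num : (-1:ℚ) ≠ 0)]
    exact Even.neg_one_zpow ⟨b, rfl⟩
  have := congrArg (· * (-1 : ℚ) ^ b) h2
  simp only [mul_assoc, h3, mul_one] at this
  linarith [this]

/-- For `l` of parity different from `n`, the alternating convolution of unsigned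
Stirling numbers of the first kind vanishes. -/
theorem stmt0 (n l : ℕ) (hpar : l % 2 ≠ n % 2) :
    ∑ k ∈ Finset.range (n + 1), (n.choose k : ℚ) *
      ∑ p ∈ Finset.HasAntidiagonal.antidiagonal l,
        (-1 : ℚ) ^ ((k : ℤ) + 1 - (p.2 : ℤ)) *
          (stirC (n - k + 1) p.1 : ℚ) * (stirC (k + 1) p.2 : ℚ) = 0 := by
  set f : ℕ → ℚ := fun k => (n.choose k : ℚ) *
      ∑ p ∈ Finset.HasAntidiagonal.antidiagonal l,
        (-1 : ℚ) ^ ((k : ℤ) + 1 - (p.2 : ℤ)) *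
          (stirC (n - k + 1) p.1 : ℚ) * (stirC (k + 1) p.2 : ℚ) with hf
  have key : ∀ k ∈ Finset.range (n + 1), f (n - k) = - f k := by
    intro k hk
    rw [Finset.mem_range, Nat.lt_succ_iff] at hk
    have h1 : n - (n - k) = k := Nat.sub_sub_self hk
    simp only [hf, h1, Nat.choose_symm hk]
    rw [← mul_neg, ← Finset.sum_neg_distrib]
    congr 1
    rw [← Finset.Nat.sum_antidiagonal_swap
      (f := fun p => (-1 : ℚ) ^ (((n - k : ℕ) : ℤ) + 1 - (p.2 : ℤ)) *
          (stirC (k + 1) p.1 : ℚ) * (stirC (n - k + 1) p.2 : ℚ))]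
    refine Finset.sum_congr rfl fun p hp => ?_
    rw [Finset.HasAntidiagonal.mem_antidiagonal] at hp
    simp only [Prod.fst_swap, Prod.snd_swap]
    have hodd : Odd ((((n - k : ℕ) : ℤ) + 1 - (p.1 : ℤ)) + ((k : ℤ) + 1 - (p.2 : ℤ))) := by
      have hc : ((n - k : ℕ) : ℤ) = (n : ℤ) - k := by
        push_cast [Nat.cast_sub hk]; ring
      rw [Int.odd_iff]
      omega
    rw [sign_flip _ _ hodd]
    ring
  have hrefl := Finset.sum_range_reflect f (n + 1)
  simp only [Nat.add_sub_cancel] at hrefl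
  have : ∑ j ∈ Finset.range (n + 1), f (n - j) = - ∑ j ∈ Finset.range (n + 1), f j := by
    rw [← Finset.sum_neg_distrib]
    exact Finset.sum_congr rfl key
  rw [this] at hrefl
  linarith [hrefl]
end

section
/- The numbers O(n,g) of permutations of [n] with exactly n-2g odd cycles satisfy O(n+1,g) = O(n,g) + ∑_{k=1}^{g} (n)_{2k} · O(n-2k, g-k), where (n)_{2k} = n(n-1)⋯(n-2k+1) is the falling factorial. -/
open Finset Polynomial

open Equiv Equiv.Perm List

section Aux
variable {α : Type*} [Fintype α] [DecidableEq α]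

lemma cycleCount_le_card (σ : Perm α) : cycleCount σ ≤ Fintype.card α := by
  have h1 : σ.cycleType.sum = σ.support.card := sum_cycleType σ
  have h2 : σ.support.card ≤ Fintype.card α := Finset.card_le_univ _
  have h3 : Multiset.card σ.cycleType ≤ σ.cycleType.sum := by
    have := Multiset.card_nsmul_le_sum (s := σ.cycleType) (a := 1) (fun x hx => by
      have := Equiv.Perm.two_le_of_mem_cycleType hx; omega)
    simpa using this
  unfold cycleCount
  omega

lemma cycleType_permCongr {β : Type*} [Fintype β] [DecidableEq β] (e : α ≃ β) (σ : Perm α) :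
    (e.permCongr σ).cycleType = σ.cycleType := by
  have h : e.permCongr σ
      = σ.extendDomain (e.trans (Equiv.subtypeUnivEquiv (fun _ : β => trivial)).symm) := by
    ext x
    rw [Equiv.Perm.extendDomain_apply_subtype _ _ (trivial : (fun _ : β => True) x)]
    simp [Equiv.subtypeUnivEquiv]
  rw [h, Equiv.Perm.cycleType_extendDomain]

lemma card_odd_perm_set (m : ℕ) (hm : Fintype.card α = m) (g' : ℤ) :
    Nat.card {σ : Perm α // (∀ l ∈ σ.cycleType, Odd l) ∧ (cycleCount σ : ℤ) = (m : ℤ) - 2 * g'}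
      = oddCyclePermCount m g' := by
  have e : α ≃ Fin m := Fintype.equivFinOfCardEq hm
  rw [oddCyclePermCount]
  apply Nat.card_congr
  refine Equiv.subtypeEquiv e.permCongr fun σ => ?_
  have h1 : (e.permCongr σ).cycleType = σ.cycleType := cycleType_permCongr e σ
  have h2 : cycleCount (e.permCongr σ) = cycleCount σ := by
    unfold cycleCount
    rw [h1, Fintype.card_fin, hm]
  rw [h1, h2]

lemma oddCyclePermCount_neg (m : ℕ) (j : ℤ) (hj : j < 0) : oddCyclePermCount m j = 0 := by
  rw [oddCyclePermCount]
  have : IsEmpty {σ : Equiv.Perm (Fin m) //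
      (∀ l ∈ σ.cycleType, Odd l) ∧ (cycleCount σ : ℤ) = (m : ℤ) - 2 * j} := by
    constructor
    rintro ⟨σ, -, h⟩
    have := cycleCount_le_card σ
    rw [Fintype.card_fin] at this
    omega
  simp [Nat.card_of_isEmpty]

lemma sum_ct_le (δ : Perm α) :
    δ.cycleType.sum ≤ Fintype.card α := by
  rw [Equiv.Perm.sum_cycleType]
  exact Finset.card_le_univ _

lemma card_cycleThrough (z : α) (d : ℕ) (hd : 1 ≤ d) :
    Nat.card {c : Perm α // c.IsCycle ∧ z ∈ c.support ∧ c.support.card = d + 1}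
      = (Fintype.card α - 1).descFactorial d := by
  classical
  set G : (Fin d ↪ {x : α // x ≠ z}) →
      {c : Perm α // c.IsCycle ∧ z ∈ c.support ∧ c.support.card = d + 1} := fun e => by
    refine ⟨formPerm (z :: List.ofFn (fun i => ((e i : {x : α // x ≠ z}) : α))), ?_, ?_, ?_⟩
    all_goals {
      have hlen : (z :: List.ofFn (fun i => ((e i : {x : α // x ≠ z}) : α))).length = d + 1 := by
        simp
      have hnd : (z :: List.ofFn (fun i => ((e i : {x : α // x ≠ z}) : α))).Nodup := by
        rw [List.nodup_cons]
        refine ⟨fun h => ?_, List.nodup_ofFn.mpr (Subtype.val_injective.comp e.injective)⟩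
        obtain ⟨i, hi⟩ := List.mem_ofFn.mp h
        exact (e i).2 hi
      have h2 : 2 ≤ (z :: List.ofFn (fun i => ((e i : {x : α // x ≠ z}) : α))).length := by omega
      have hsupp := support_formPerm_of_nodup _ hnd (fun x hx => by
        apply_fun List.length at hx; simp at hx; omega)
      first
      | exact isCycle_formPerm hnd h2
      | (rw [hsupp, List.mem_toFinset]; exact List.mem_cons_self)
      | (rw [hsupp, List.card_toFinset, hnd.dedup]; simpa using rfl) }
    with hG
  have key : ∀ e, toList (G e).1 z = z :: List.ofFn (fun i => ((e i : {x : α // x ≠ z}) : α)) := by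
    intro e
    have hnd : (z :: List.ofFn (fun i => ((e i : {x : α // x ≠ z}) : α))).Nodup := by
      rw [List.nodup_cons]
      refine ⟨fun h => ?_, List.nodup_ofFn.mpr (Subtype.val_injective.comp e.injective)⟩
      obtain ⟨i, hi⟩ := List.mem_ofFn.mp h
      exact (e i).2 hi
    have h2 : 2 ≤ (z :: List.ofFn (fun i => ((e i : {x : α // x ≠ z}) : α))).length := by
      simp; omega
    have := toList_formPerm_nontrivial _ h2 hnd
    simpa [hG] using this
  have hGbij : Function.Bijective G := by
    constructor
    · intro e₁ e₂ h
      have h1 := key e₁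
      have h2 := key e₂
      rw [h, h2] at h1
      have h3 := List.cons_injective h1.symm
      have h4 : (fun i => ((e₁ i : {x : α // x ≠ z}) : α)) = fun i => ((e₂ i : {x : α // x ≠ z}) : α) :=
        List.ofFn_injective h3
      ext i
      exact congrFun h4 i
    · rintro ⟨c, hc, hz, hcard⟩
      have hcz : c.cycleOf z = c := hc.cycleOf_eq (mem_support.mp hz)
      have hlen : (toList c z).length = d + 1 := by
        rw [Equiv.Perm.length_toList, hcz, hcard]
      have hnd : (toList c z).Nodup := nodup_toList c z
      have h0 : (toList c z).get ⟨0, by omega⟩ = z := by simpa using toList_getElem_zero c z hz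
      refine ⟨⟨fun i => ⟨(toList c z).get ⟨(i : ℕ) + 1, by omega⟩, fun hh => ?_⟩,
        fun i j hij => ?_⟩, ?_⟩
      · have := List.nodup_iff_injective_get.mp hnd (hh.trans h0.symm)
        simp at this
      · have := List.nodup_iff_injective_get.mp hnd (congrArg Subtype.val hij)
        simpa [Fin.ext_iff] using this
      · apply Subtype.ext
        show formPerm (z :: List.ofFn _) = c
        have heq : (z :: List.ofFn (fun i : Fin d => (toList c z).get ⟨(i : ℕ) + 1, by omega⟩))
            = toList c z := by
          apply List.ext_get (by simp [hlen])
          rintro ⟨⟩ h1 h2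
          · simpa using h0.symm
          · simp
        show formPerm (z :: List.ofFn (fun i : Fin d => (toList c z).get ⟨(i : ℕ) + 1, by omega⟩)) = c
        rw [heq, formPerm_toList, hcz]
  rw [← Nat.card_eq_of_bijective G hGbij, Nat.card_eq_fintype_card,
    Fintype.card_embedding_eq, Fintype.card_fin]
  congr 1
  exact (Fintype.card_subtype_compl _).trans (by rw [Fintype.card_subtype_eq])

end Aux

section DEC
variable {α : Type*} [Fintype α] [DecidableEq α]

/-- complement predicate -/
def pb (z : α) (c : Perm α) (x : α) : Prop := x ∉ c.support ∧ x ≠ z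

instance (z : α) (c : Perm α) : DecidablePred (pb z c) := fun _ => instDecidableAnd

variable {z : α} {c : Perm α}

lemma key_mem_factors (H : ¬ c = 1) {σ : Perm α} (hσ : σ.cycleOf z = c) :
    c ∈ σ.cycleFactorsFinset := by
  rw [← hσ]
  rw [cycleOf_mem_cycleFactorsFinset_iff, mem_support]
  intro h
  exact H (hσ ▸ (cycleOf_eq_one_iff σ).mpr h)

lemma key_disj (H : ¬ c = 1) {σ : Perm α} (hσ : σ.cycleOf z = c) :
    Disjoint (σ * c⁻¹) c :=
  disjoint_mul_inv_of_mem_cycleFactorsFinset (key_mem_factors H hσ)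

lemma key_zmem (H : ¬ c = 1) {σ : Perm α} (hσ : σ.cycleOf z = c) : z ∈ c.support := by
  have hz : σ z ≠ z := fun h => H (hσ ▸ (cycleOf_eq_one_iff σ).mpr h)
  rw [← hσ]
  exact (mem_support_cycleOf_iff).mpr ⟨SameCycle.refl _ _, mem_support.mpr hz⟩

lemma key_comm {σ : Perm α} (hσ : σ.cycleOf z = c) : Commute (σ * c⁻¹) c := by
  by_cases H : c = 1
  · subst H; simp [Commute, SemiconjBy]
  · exact (key_disj H hσ).commute

lemma key_fz {σ : Perm α} (hσ : σ.cycleOf z = c) : (σ * c⁻¹) z = z := by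
  by_cases H : c = 1
  · have hz : σ z = z := (cycleOf_eq_one_iff σ).mp (hσ.trans H)
    subst H; simp [hz]
  · have := (key_disj H hσ).disjoint_support
    have hz : z ∉ (σ * c⁻¹).support := Finset.disjoint_right.mp this (key_zmem H hσ)
    simpa [notMem_support] using hz

lemma key_pinv {σ : Perm α} (hσ : σ.cycleOf z = c) :
    ∀ x, pb z c x ↔ pb z c ((σ * c⁻¹) x) := by
  intro x
  set f := σ * c⁻¹ with hf
  have hcomm : f * c = c * f := key_comm hσ
  have hfz : f z = z := key_fz hσ
  have hsupp : ∀ y, f y ∈ c.support ↔ y ∈ c.support := by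
    intro y
    have hcf : c (f y) = f (c y) := by
      have h' := congrArg (fun p : Perm α => p y) hcomm
      simpa [Equiv.Perm.mul_apply] using h'.symm
    simp only [mem_support, hcf]
    constructor
    · intro h hc'
      exact h (by rw [hc'])
    · intro h hc'
      exact h (f.injective hc')
  constructor
  · rintro ⟨h1, h2⟩
    exact ⟨fun h => h1 ((hsupp x).mp h), fun h => h2 (f.injective (h.trans hfz.symm))⟩
  · rintro ⟨h1, h2⟩
    refine ⟨fun h => h1 ((hsupp x).mpr h), fun h => h2 (by rw [h, hfz])⟩

lemma key_ofSubtype_pb (δ : Perm (Subtype (pb z c))) :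
    ∀ x, (ofSubtype δ) x ≠ x → pb z c x := by
  intro x hx
  have hx' : x ∈ (ofSubtype δ).support := mem_support.mpr hx
  rw [support_ofSubtype] at hx'
  obtain ⟨y, _, rfl⟩ := Finset.mem_map.mp hx'
  exact y.2

lemma key_disj_ofSubtype (δ : Perm (Subtype (pb z c))) : Disjoint c (ofSubtype δ) := by
  rw [disjoint_iff_disjoint_support, Finset.disjoint_right]
  intro x hx
  have := key_ofSubtype_pb δ x (mem_support.mp hx)
  exact this.1

lemma key_ofSubtype_z (δ : Perm (Subtype (pb z c))) : (ofSubtype δ) z = z := by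
  apply ofSubtype_apply_of_not_mem
  simp [pb]

lemma key_cycleOf_mul (H : c = 1 ∨ (c.IsCycle ∧ z ∈ c.support)) (δ : Perm (Subtype (pb z c))) :
    (c * ofSubtype δ).cycleOf z = c := by
  rcases H with rfl | ⟨hc, hz⟩
  · rw [one_mul, cycleOf_eq_one_iff]
    exact key_ofSubtype_z δ
  · rw [cycleOf_mul_of_apply_right_eq_self (key_disj_ofSubtype δ).commute z (key_ofSubtype_z δ)]
    exact hc.cycleOf_eq (mem_support.mp hz)

/-- The decomposition equiv. -/
def cycleDecomp (H : c = 1 ∨ (c.IsCycle ∧ z ∈ c.support)) :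
    {σ : Perm α // σ.cycleOf z = c} ≃ Perm (Subtype (pb z c)) where
  toFun := fun σh => (σh.1 * c⁻¹).subtypePerm (fun x => (key_pinv σh.2 x).symm)
  invFun := fun δ => ⟨c * ofSubtype δ, key_cycleOf_mul H δ⟩
  left_inv := by
    rintro ⟨σ, hσ⟩
    apply Subtype.ext
    show c * ofSubtype ((σ * c⁻¹).subtypePerm (fun x => (key_pinv hσ x).symm)) = σ
    rw [ofSubtype_subtypePerm (fun x => (key_pinv hσ x).symm) (fun x hx => by
      by_cases H1 : c = 1
      · subst H1
        refine ⟨by simp, fun hz => hx ?_⟩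
        subst hz; exact key_fz hσ
      · refine ⟨fun hs => hx ?_, fun hz => hx ?_⟩
        · have := Finset.disjoint_left.mp (key_disj H1 hσ).disjoint_support
          have h2 : x ∉ (σ * c⁻¹).support := fun hh => (this hh) hs
          simpa [notMem_support] using h2
        · subst hz; exact key_fz hσ)]
    have hcomm : (σ * c⁻¹) * c = c * (σ * c⁻¹) := key_comm hσ
    rw [← hcomm]
    simp [mul_assoc]
  right_inv := by
    intro δ
    have hcd : c * ofSubtype δ * c⁻¹ = ofSubtype δ := by
      have h' := (key_disj_ofSubtype δ).commute.eq
      rw [h']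
      simp [mul_assoc]
    apply Equiv.ext
    intro x
    apply Subtype.ext
    show ((c * ofSubtype δ * c⁻¹)) x.1 = ((δ x : Subtype (pb z c)) : α)
    rw [hcd, ofSubtype_apply_coe]

lemma cycleType_decomp (H : c = 1 ∨ (c.IsCycle ∧ z ∈ c.support))
    (δ : Perm (Subtype (pb z c))) :
    (c * ofSubtype δ).cycleType = c.cycleType + δ.cycleType := by
  rcases H with rfl | ⟨hc, _⟩
  · simp [cycleType_ofSubtype]
  · rw [Disjoint.cycleType_mul (key_disj_ofSubtype δ), cycleType_ofSubtype]

end DEC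

section Main
variable (n g : ℕ)

def Qp (n g : ℕ) (σ : Perm (Fin (n+1))) : Prop :=
  (∀ l ∈ σ.cycleType, Odd l) ∧ (cycleCount σ : ℤ) = ((n+1 : ℕ) : ℤ) - 2 * (g : ℤ)

lemma fib_common (c : Perm (Fin (n+1))) (H : c = 1 ∨ (c.IsCycle ∧ (0 : Fin (n+1)) ∈ c.support)) :
    Nat.card {σ : Perm (Fin (n+1)) // Qp n g σ ∧ σ.cycleOf 0 = c}
      = Nat.card {δ : Perm (Subtype (pb (0 : Fin (n+1)) c)) // Qp n g (c * ofSubtype δ)} := by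
  apply Nat.card_congr
  refine Equiv.trans (Equiv.subtypeEquivRight (fun σ => and_comm) :
      {σ : Perm (Fin (n+1)) // Qp n g σ ∧ σ.cycleOf 0 = c} ≃
      {σ : Perm (Fin (n+1)) // σ.cycleOf 0 = c ∧ Qp n g σ}) ?_
  refine Equiv.trans ((Equiv.subtypeSubtypeEquivSubtypeInter (fun σ : Perm (Fin (n+1)) =>
      σ.cycleOf 0 = c) (Qp n g)).symm) ?_
  refine (((cycleDecomp H).symm.subtypeEquiv (fun δ => ?_)).symm)
  exact Iff.rfl

set_option maxHeartbeats 1000000 in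
lemma fib1 : Nat.card {σ : Perm (Fin (n+1)) // Qp n g σ ∧ σ.cycleOf 0 = 1}
    = oddCyclePermCount n ((g : ℤ)) := by
  have H : (1 : Perm (Fin (n+1))) = 1 ∨ ((1 : Perm (Fin (n+1))).IsCycle ∧
      (0 : Fin (n+1)) ∈ (1 : Perm (Fin (n+1))).support) := Or.inl rfl
  rw [fib_common n g 1 H]
  have hsub : Fintype.card (Subtype (pb (0 : Fin (n+1)) (1 : Perm (Fin (n+1))))) = n := by
    have e : Subtype (pb (0 : Fin (n+1)) 1) ≃ {x : Fin (n+1) // ¬ x = 0} :=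
      Equiv.subtypeEquivRight (fun x => by simp [pb])
    rw [Fintype.card_congr e, Fintype.card_subtype_compl, Fintype.card_subtype_eq,
      Fintype.card_fin]
    omega
  rw [← card_odd_perm_set n hsub ((g : ℤ))]
  apply Nat.card_congr
  apply Equiv.subtypeEquivRight
  intro δ
  have hct : ((1 : Perm (Fin (n+1))) * ofSubtype δ).cycleType = δ.cycleType := by
    rw [cycleType_decomp H]; simp
  have hsum : δ.cycleType.sum ≤ n := by have := sum_ct_le δ; rwa [hsub] at this
  constructor
  · rintro ⟨h1, h2⟩
    refine ⟨fun l hl => h1 l (by rw [hct]; exact hl), ?_⟩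
    unfold cycleCount at h2 ⊢
    rw [hct, Fintype.card_fin] at h2
    rw [hsub]
    omega
  · rintro ⟨h1, h2⟩
    refine ⟨fun l hl => h1 l (by rwa [hct] at hl), ?_⟩
    unfold cycleCount at h2 ⊢
    rw [hsub] at h2
    rw [hct, Fintype.card_fin]
    omega

set_option maxHeartbeats 1000000 in
lemma fib2 (c : Perm (Fin (n+1))) (hc : c.IsCycle) (hz : (0 : Fin (n+1)) ∈ c.support)
    (k : ℕ) (hL : c.support.card = 2 * k + 1) :
    Nat.card {σ : Perm (Fin (n+1)) // Qp n g σ ∧ σ.cycleOf 0 = c}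
      = oddCyclePermCount (n - 2 * k) ((g : ℤ) - (k : ℤ)) := by
  have H : c = 1 ∨ (c.IsCycle ∧ (0 : Fin (n+1)) ∈ c.support) := Or.inr ⟨hc, hz⟩
  have h2k : 2 * k ≤ n := by
    have := Finset.card_le_univ c.support
    rw [hL] at this
    simp at this
    omega
  have hsub : Fintype.card (Subtype (pb (0 : Fin (n+1)) c)) = n - 2 * k := by
    have e : Subtype (pb (0 : Fin (n+1)) c) ≃ {x : Fin (n+1) // ¬ x ∈ c.support} :=
      Equiv.subtypeEquivRight (fun x => by
        constructor
        · exact fun h => h.1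
        · exact fun h => ⟨h, fun h0 => h (h0 ▸ hz)⟩)
    rw [Fintype.card_congr e, Fintype.card_subtype_compl, Fintype.card_fin]
    have : Fintype.card {x : Fin (n+1) // x ∈ c.support} = c.support.card :=
      Fintype.card_coe _
    omega
  rw [fib_common n g c H, ← card_odd_perm_set (n - 2*k) hsub ((g : ℤ) - (k : ℤ))]
  apply Nat.card_congr
  apply Equiv.subtypeEquivRight
  intro δ
  have hct : (c * ofSubtype δ).cycleType = (2*k+1) ::ₘ δ.cycleType := by
    rw [cycleType_decomp H, hc.cycleType, hL]
    rfl
  have hsum : δ.cycleType.sum ≤ n - 2*k := by have := sum_ct_le δ; rwa [hsub] at this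
  constructor
  · rintro ⟨h1, h2⟩
    refine ⟨fun l hl => h1 l (by rw [hct]; exact Multiset.mem_cons_of_mem hl), ?_⟩
    unfold cycleCount at h2 ⊢
    rw [hct, Fintype.card_fin] at h2
    simp only [Multiset.card_cons, Multiset.sum_cons] at h2
    rw [hsub]
    omega
  · rintro ⟨h1, h2⟩
    have hodd : ∀ l ∈ (c * ofSubtype δ).cycleType, Odd l := by
      intro l hl
      rw [hct] at hl
      rcases Multiset.mem_cons.mp hl with rfl | hl
      · exact ⟨k, by ring⟩
      · exact h1 l hl
    refine ⟨hodd, ?_⟩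
    unfold cycleCount at h2 ⊢
    rw [hsub] at h2
    rw [hct, Fintype.card_fin]
    simp only [Multiset.card_cons, Multiset.sum_cons]
    omega

lemma nat_card_sigma {ι : Type*} [Fintype ι] (T : ι → Type*) [∀ i, Fintype (T i)] :
    Nat.card ((i : ι) × T i) = ∑ i, Nat.card (T i) := by
  simp [Nat.card_eq_fintype_card, Fintype.card_sigma]

end Main

set_option maxHeartbeats 1000000 in
/-- `O(n+1,g) = O(n,g) + ∑_{k=1}^g (n)_{2k} O(n-2k, g-k)`. -/
theorem stmt2 (n g : ℕ) :
    oddCyclePermCount (n + 1) (g : ℤ) =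
      oddCyclePermCount n (g : ℤ) +
        ∑ k ∈ Finset.Icc 1 g,
          n.descFactorial (2 * k) * oddCyclePermCount (n - 2 * k) ((g : ℤ) - (k : ℤ)) := by
  classical
  set F : Perm (Fin (n+1)) → ℕ :=
    fun c => Nat.card {σ : Perm (Fin (n+1)) // Qp n g σ ∧ σ.cycleOf 0 = c} with hF
  have step0 : oddCyclePermCount (n + 1) (g : ℤ)
      = Nat.card {σ : Perm (Fin (n+1)) // Qp n g σ} := rfl
  have stepA : Nat.card {σ : Perm (Fin (n+1)) // Qp n g σ}
      = ∑ c : Perm (Fin (n+1)), F c := by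
    rw [Nat.card_congr (Equiv.sigmaFiberEquiv
      (fun σh : {σ : Perm (Fin (n+1)) // Qp n g σ} => σh.1.cycleOf 0)).symm,
      nat_card_sigma]
    apply Finset.sum_congr rfl
    intro c _
    exact Nat.card_congr (Equiv.subtypeSubtypeEquivSubtypeInter (Qp n g)
      (fun σ => σ.cycleOf 0 = c))
  have stepD : ∀ c ∈ Finset.univ.erase (1 : Perm (Fin (n+1))),
      F c = ∑ k ∈ Finset.Icc 1 g,
        (if (c.IsCycle ∧ (0 : Fin (n+1)) ∈ c.support ∧ c.support.card = 2*k+1)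
          then oddCyclePermCount (n - 2*k) ((g : ℤ) - (k : ℤ)) else 0) := by
    intro c hc
    have hne : c ≠ 1 := (Finset.mem_erase.mp hc).1
    by_cases h1 : c.IsCycle ∧ (0 : Fin (n+1)) ∈ c.support
    · obtain ⟨hcyc, hz⟩ := h1
      by_cases hodd : Odd c.support.card
      · obtain ⟨k₀, hk₀⟩ := hodd
        have hL : c.support.card = 2 * k₀ + 1 := by omega
        have hk₀1 : 1 ≤ k₀ := by
          have h2 := hcyc.two_le_card_support
          omega
        show Nat.card {σ : Perm (Fin (n+1)) // Qp n g σ ∧ σ.cycleOf 0 = c} = _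
        rw [fib2 n g c hcyc hz k₀ hL]
        have hcong : ∀ k ∈ Finset.Icc 1 g,
            (if (c.IsCycle ∧ (0 : Fin (n+1)) ∈ c.support ∧ c.support.card = 2*k+1)
              then oddCyclePermCount (n - 2*k) ((g : ℤ) - (k : ℤ)) else 0)
            = (if k = k₀ then oddCyclePermCount (n - 2*k) ((g : ℤ) - (k : ℤ)) else 0) := by
          intro k _
          congr 1
          apply propext
          constructor
          · rintro ⟨-, -, hcard⟩; omega
          · rintro rfl; exact ⟨hcyc, hz, hL⟩
        rw [Finset.sum_congr rfl hcong, Finset.sum_ite_eq' (Finset.Icc 1 g) k₀]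
        by_cases hk : k₀ ≤ g
        · rw [if_pos (Finset.mem_Icc.mpr ⟨hk₀1, hk⟩)]
        · rw [if_neg (fun hmem => hk (Finset.mem_Icc.mp hmem).2)]
          apply oddCyclePermCount_neg
          have : g < k₀ := by omega
          omega
      · have hFc : F c = 0 := by
          show Nat.card {σ : Perm (Fin (n+1)) // Qp n g σ ∧ σ.cycleOf 0 = c} = 0
          have : IsEmpty {σ : Perm (Fin (n+1)) // Qp n g σ ∧ σ.cycleOf 0 = c} := by
            constructor
            rintro ⟨σ, ⟨hoddσ, -⟩, hcyc'⟩
            have hmem : c ∈ σ.cycleFactorsFinset := key_mem_factors hne hcyc'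
            have hmem2 : c.support.card ∈ σ.cycleType := by
              rw [Equiv.Perm.cycleType_def]
              exact Multiset.mem_map_of_mem _ hmem
            exact hodd (hoddσ _ hmem2)
          exact Nat.card_of_isEmpty
        rw [hFc]
        symm
        apply Finset.sum_eq_zero
        intro k _
        rw [if_neg]
        rintro ⟨-, -, hcard⟩
        exact hodd ⟨k, by omega⟩
    · have hFc : F c = 0 := by
        show Nat.card {σ : Perm (Fin (n+1)) // Qp n g σ ∧ σ.cycleOf 0 = c} = 0
        have : IsEmpty {σ : Perm (Fin (n+1)) // Qp n g σ ∧ σ.cycleOf 0 = c} := by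
          constructor
          rintro ⟨σ, -, hcyc'⟩
          have h0 : σ 0 ≠ 0 := by
            intro h
            exact hne (hcyc'.symm.trans ((cycleOf_eq_one_iff σ).mpr h))
          refine h1 ⟨?_, ?_⟩
          · rw [← hcyc']; exact isCycle_cycleOf σ h0
          · rw [← hcyc']
            exact mem_support_cycleOf_iff.mpr ⟨SameCycle.refl _ _, mem_support.mpr h0⟩
        exact Nat.card_of_isEmpty
      rw [hFc]
      symm
      apply Finset.sum_eq_zero
      intro k _
      rw [if_neg]
      rintro ⟨ha, hb, -⟩
      exact h1 ⟨ha, hb⟩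
  have stepE : ∀ k ∈ Finset.Icc 1 g,
      (∑ c ∈ Finset.univ.erase (1 : Perm (Fin (n+1))),
        (if (c.IsCycle ∧ (0 : Fin (n+1)) ∈ c.support ∧ c.support.card = 2*k+1)
          then oddCyclePermCount (n - 2*k) ((g : ℤ) - (k : ℤ)) else 0))
      = n.descFactorial (2*k) * oddCyclePermCount (n - 2*k) ((g : ℤ) - (k : ℤ)) := by
    intro k hk
    have hk1 : 1 ≤ k := (Finset.mem_Icc.mp hk).1
    rw [← Finset.sum_filter, Finset.sum_const, smul_eq_mul]
    congr 1
    have herase : (Finset.univ.erase (1 : Perm (Fin (n+1)))).filter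
        (fun c => c.IsCycle ∧ (0 : Fin (n+1)) ∈ c.support ∧ c.support.card = 2*k+1)
        = Finset.univ.filter
        (fun c => c.IsCycle ∧ (0 : Fin (n+1)) ∈ c.support ∧ c.support.card = 2*k+1) := by
      ext c
      simp only [Finset.mem_filter, Finset.mem_erase, Finset.mem_univ, true_and, and_true]
      constructor
      · rintro ⟨-, h⟩; exact h
      · rintro h; exact ⟨h.1.ne_one, h⟩
    rw [herase]
    have := card_cycleThrough (0 : Fin (n+1)) (2*k) (by omega)
    rw [Nat.card_eq_fintype_card, Fintype.card_subtype, Fintype.card_fin] at this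
    simpa using this
  rw [step0, stepA, ← Finset.add_sum_erase _ F (Finset.mem_univ (1 : Perm (Fin (n+1)))),
    Finset.sum_congr rfl stepD, Finset.sum_comm, Finset.sum_congr rfl stepE]
  congr 1
  exact fib1 n g
end

section
/- Define A(n,g) = (2n)!/((n+1)!·n!·2^{2g}) · O(n+1,g), where O(m,g) is the number of permutations of [m] with exactly m-2g odd cycles. Then (n+1)·A(n,g) = 2(2n-1)·A(n-1,g) + (2n-1)(n-1)(2n-3)·A(n-2,g-1). -/
open Finset Polynomial

/-- `A(n,g) = (2n)!·O(n+1,g) / ((n+1)!·n!·2^(2g))` (Lehman–Walsh). -/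
noncomputable def Amap (n : ℕ) (g : ℤ) : ℚ :=
  ((2 * n).factorial : ℚ) * (oddCyclePermCount (n + 1) g : ℚ) /
    (((n + 1).factorial : ℚ) * (n.factorial : ℚ) * (2 : ℚ) ^ (2 * g))

open Equiv Equiv.Perm Finset

variable {α : Type*} [DecidableEq α] [Fintype α]

lemma myCard_sigma {ι : Type*} [Fintype ι] (S : ι → Type*) [∀ i, Finite (S i)] :
    Nat.card (Σ i, S i) = ∑ i, Nat.card (S i) := by
  classical
  haveI : ∀ i, Fintype (S i) := fun i => Fintype.ofFinite _
  simp [Nat.card_eq_fintype_card]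

lemma isCycle_insert {c : Perm α} (hc : c.IsCycle) {x p : α} (hx : c x = x) (hp : c p ≠ p) :
    IsCycle (swap x p * c) ∧ (swap x p * c).support = insert x c.support := by
  have hpx : p ≠ x := by rintro rfl; exact hp hx
  set g := swap x p * c with hg
  have hgx : g x = p := by simp [hg, hx]
  have hcpne : c p ≠ x := fun h => hpx (by rw [← hx] at h; exact c.injective h)
  have hgp : g p = c p := by
    rw [hg, Perm.mul_apply, swap_apply_of_ne_of_ne hcpne hp]
  have hggx : g (g x) ≠ x := by rw [hgx, hgp]; exact hcpne
  have hfix : ∀ j : ℕ, (c ^ j) x = x := by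
    intro j; induction j with
    | zero => rfl
    | succ j ihj => rw [pow_succ, Perm.mul_apply, hx, ihj]
  have hsupp : g.support = insert x c.support := by
    have h1 : (swap x (g x) * g).support = g.support \ {x} := support_swap_mul_eq g x hggx
    have h2 : swap x (g x) * g = c := by rw [hgx, hg, ← mul_assoc, swap_mul_self, one_mul]
    rw [h2] at h1
    have hxg : x ∈ g.support := mem_support.2 (by rw [hgx]; exact hpx)
    ext z
    by_cases hz : z = x
    · simp [hz, hxg]
    · constructor
      · intro hzz; exact Finset.mem_insert_of_mem (h1 ▸ Finset.mem_sdiff.2 ⟨hzz, by simp [hz]⟩)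
      · intro hzz
        rcases Finset.mem_insert.1 hzz with h | h
        · exact absurd h hz
        · exact (Finset.mem_sdiff.1 (h1 ▸ h)).1
  refine ⟨⟨x, by rw [hgx]; exact hpx, ?_⟩, hsupp⟩
  intro y hy
  have hmem : y ∈ g.support := mem_support.2 hy
  rw [hsupp] at hmem
  rcases Finset.mem_insert.1 hmem with rfl | hmem
  · exact SameCycle.refl _ _
  · have hkey : ∀ i : ℕ, SameCycle g x ((c ^ i) p) := by
      intro i
      induction i with
      | zero => exact ⟨1, by simpa using hgx⟩
      | succ i ih =>
        by_cases hcase : (c ^ (i + 1)) p = p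
        · rw [hcase]; exact ⟨1, by simpa using hgx⟩
        · have hne_x : (c ^ (i + 1)) p ≠ x := by
            intro h
            rw [← hfix (i + 1)] at h
            exact hpx ((c ^ (i + 1)).injective h)
          have hstep : g ((c ^ i) p) = (c ^ (i + 1)) p := by
            rw [hg, Perm.mul_apply, ← Perm.mul_apply c (c ^ i), ← pow_succ']
            exact swap_apply_of_ne_of_ne hne_x hcase
          rw [← hstep]
          exact (sameCycle_apply_right).2 ih
    obtain ⟨i, hi⟩ := hc.exists_pow_eq hp (mem_support.1 hmem)
    rw [← hi]; exact hkey i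



lemma myCycleOf_conj (φ e : Perm α) (a : α) :
    (φ * e * φ⁻¹).cycleOf (φ a) = φ * e.cycleOf a * φ⁻¹ := by
  ext b
  have hsc : ∀ y : α, (φ * e * φ⁻¹).SameCycle (φ a) (φ y) ↔ e.SameCycle a y := by
    intro y
    constructor
    · rintro ⟨i, hi⟩
      refine ⟨i, ?_⟩
      have : (φ * e * φ⁻¹) ^ i = φ * e ^ i * φ⁻¹ := by
        rw [← MulAut.conj_apply, ← map_zpow, MulAut.conj_apply]
      rw [this] at hi
      simp only [Perm.mul_apply, Perm.inv_def, Equiv.symm_apply_apply] at hi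
      exact φ.injective hi
    · rintro ⟨i, hi⟩
      refine ⟨i, ?_⟩
      have : (φ * e * φ⁻¹) ^ i = φ * e ^ i * φ⁻¹ := by
        rw [← MulAut.conj_apply, ← map_zpow, MulAut.conj_apply]
      rw [this]
      simp only [Perm.mul_apply, Perm.inv_def, Equiv.symm_apply_apply, hi]
  have hb : b = φ (φ⁻¹ b) := (φ.apply_symm_apply b).symm
  rw [hb]
  rw [show ((φ * e.cycleOf a * φ⁻¹) (φ (φ⁻¹ b))) = φ (e.cycleOf a (φ⁻¹ b)) by
    simp [Perm.mul_apply]]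
  rw [cycleOf_apply, cycleOf_apply]
  by_cases h : e.SameCycle a (φ⁻¹ b)
  · rw [if_pos h, if_pos ((hsc _).2 h)]
    simp [Perm.mul_apply]
  · rw [if_neg h, if_neg (fun hh => h ((hsc _).1 hh))]

lemma myCycleOf_fix {e : Perm α} {x : α} (hx : e x = x) (p : α) : e.cycleOf p x = x := by
  rw [cycleOf_apply]; split_ifs <;> simp [hx]

/-- Insertion of a fixed point `x` into the cycle of `p`. -/
lemma ins_main {e : Perm α} {x p : α} (hx : e x = x) (hp : e p ≠ p) :
    cycleType (swap x p * e)
        = ((e.cycleOf p).support.card + 1) ::ₘ (cycleType e).erase (e.cycleOf p).support.card ∧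
      ((swap x p * e).cycleOf x).support.card = (e.cycleOf p).support.card + 1 := by
  have hpx : p ≠ x := by rintro rfl; exact hp hx
  set c := e.cycleOf p with hcdef
  have hcmem : c ∈ e.cycleFactorsFinset := cycleOf_mem_cycleFactorsFinset_iff.2 (mem_support.2 hp)
  have hccyc : c.IsCycle := isCycle_cycleOf e hp
  have hcx : c x = x := myCycleOf_fix hx p
  have hcp : c p ≠ p := by rw [hcdef, cycleOf_apply_self]; exact hp
  set δ := e * c⁻¹ with hδdef
  have hdisj : Disjoint δ c := disjoint_mul_inv_of_mem_cycleFactorsFinset hcmem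
  have heδc : e = δ * c := by rw [hδdef, inv_mul_cancel_right]
  have hδx : δ x = x := by
    have : c⁻¹ x = x := by rw [inv_eq_iff_eq]; exact hcx.symm
    rw [hδdef, Perm.mul_apply, this, hx]
  have hδp : δ p = p := (hdisj p).resolve_right hcp
  obtain ⟨hcyc', hsupp'⟩ := isCycle_insert hccyc hcx hcp
  set c' := swap x p * c with hc'def
  have hxc : x ∉ c.support := notMem_support.2 hcx
  have hδsupp : ∀ y ∈ c'.support, δ y = y := by
    intro y hy
    rw [hsupp'] at hy
    rcases Finset.mem_insert.1 hy with rfl | hy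
    · exact hδx
    · exact (hdisj y).resolve_right (mem_support.1 hy)
  have hdisj' : Disjoint δ c' := by
    intro y
    by_cases hy : y ∈ c'.support
    · exact Or.inl (hδsupp y hy)
    · exact Or.inr (notMem_support.1 hy)
  have hgeq : swap x p * e = δ * c' := by
    rw [heδc, hc'def]
    have hcomm : swap x p * δ = δ * swap x p := by
      have : Disjoint (swap x p) δ := by
        intro y
        by_cases hyx : y = x
        · subst hyx; exact Or.inr hδx
        by_cases hyp : y = p
        · subst hyp; exact Or.inr hδp
        · exact Or.inl (swap_apply_of_ne_of_ne hyx hyp)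
      exact this.commute.eq
    rw [← mul_assoc, hcomm, mul_assoc]
  have hcard' : c'.support.card = c.support.card + 1 := by
    rw [hsupp', Finset.card_insert_of_notMem hxc]
  -- cycleType of e and of swap x p * e
  have hctδc : cycleType e = c.support.card ::ₘ cycleType δ := by
    rw [heδc, Perm.Disjoint.cycleType_mul hdisj, hccyc.cycleType, add_comm]
    rfl
  have hctg : cycleType (swap x p * e) = (c.support.card + 1) ::ₘ cycleType δ := by
    rw [hgeq, Perm.Disjoint.cycleType_mul hdisj', hcyc'.cycleType, hcard', add_comm]
    rfl
  constructor
  · rw [hctg, hctδc, Multiset.erase_cons_head]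
  · -- cycleOf
    have hc'mem : c' ∈ (swap x p * e).cycleFactorsFinset := by
      rw [mem_cycleFactorsFinset_iff]
      refine ⟨hcyc', fun y hy => ?_⟩
      rw [hgeq]
      simpa [Perm.mul_apply] using (hδsupp _ ((apply_mem_support).2 hy)).symm
    have hxc' : x ∈ c'.support := by rw [hsupp']; exact Finset.mem_insert_self _ _
    have := cycle_is_cycleOf hxc' hc'mem
    rw [← this, hcard']

lemma ins_fix {e : Perm α} {x p : α} (hx : e x = x) (hp : e p = p) (hpx : p ≠ x) :
    cycleType (swap x p * e) = 2 ::ₘ cycleType e ∧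
      ((swap x p * e).cycleOf x).support.card = 2 := by
  have hdisj : Disjoint (swap x p) e := by
    intro y
    by_cases hyx : y = x
    · exact Or.inr (hyx ▸ hx)
    by_cases hyp : y = p
    · exact Or.inr (hyp ▸ hp)
    · exact Or.inl (swap_apply_of_ne_of_ne hyx hyp)
  have hswapcyc : IsCycle (swap x p) := isCycle_swap hpx.symm
  have hcard : (swap x p).support.card = 2 := card_support_swap hpx.symm
  constructor
  · rw [Perm.Disjoint.cycleType_mul hdisj, hswapcyc.cycleType, hcard]
    rfl
  · have hmem : swap x p ∈ (swap x p * e).cycleFactorsFinset := by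
      rw [mem_cycleFactorsFinset_iff]
      refine ⟨hswapcyc, fun a ha => ?_⟩
      rw [support_swap hpx.symm] at ha
      have hea : e a = a := by
        rcases Finset.mem_insert.1 ha with rfl | ha
        · exact hx
        · rw [Finset.mem_singleton.1 ha]; exact hp
      rw [Perm.mul_apply, hea]
    have hxs : x ∈ (swap x p).support := by
      rw [support_swap hpx.symm]; exact Finset.mem_insert_self _ _
    rw [← cycle_is_cycleOf hxs hmem, hcard]

section ExtendDomain

variable {β : Type*} [DecidableEq β] [Fintype β] {pp : β → Prop} [DecidablePred pp]
  (f : α ≃ Subtype pp)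

lemma myCycleOf_extendDomain (e : Perm α) (a : α) :
    (e.extendDomain f).cycleOf ((f a : Subtype pp) : β) = (e.cycleOf a).extendDomain f := by
  ext b
  by_cases hb : pp b
  · obtain ⟨y, rfl⟩ : ∃ y, ((f y : Subtype pp) : β) = b := ⟨f.symm ⟨b, hb⟩, by simp⟩
    rw [cycleOf_apply]
    by_cases h : e.SameCycle a y
    · rw [if_pos ((sameCycle_extendDomain (p := pp) (f := f)).2 h)]
      rw [Perm.extendDomain_apply_image, Perm.extendDomain_apply_image,
        (h.cycleOf_apply)]
    · rw [if_neg (fun hh => h ((sameCycle_extendDomain (p := pp) (f := f)).1 hh))]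
      rw [Perm.extendDomain_apply_image, cycleOf_apply_of_not_sameCycle h]
  · rw [Perm.extendDomain_apply_not_subtype _ _ hb, cycleOf_apply]
    rw [if_neg]
    intro hh
    obtain ⟨i, hi⟩ := hh
    have : ((e.extendDomain f) ^ i) ((f a : Subtype pp) : β) =
        ((f ((e ^ i) a) : Subtype pp) : β) := by
      rw [← Perm.extendDomain_zpow, Perm.extendDomain_apply_image]
    rw [this] at hi
    exact hb (hi ▸ (f ((e ^ i) a)).2)

lemma myCard_support_extendDomain (e : Perm α) :
    (e.extendDomain f).support.card = e.support.card := by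
  rw [← sum_cycleType, ← sum_cycleType, cycleType_extendDomain]

end ExtendDomain

def Lfun {γ : Type*} [Fintype γ] [DecidableEq γ] (f : Equiv.Perm γ) (a : γ) : ℕ :=
  if f a = a then 1 else (f.cycleOf a).support.card

section FinBridge

variable {k : ℕ}

lemma Lmem {e : Perm (Fin k)} {j : Fin k} (he : e j ≠ j) :
    (e.cycleOf j).support.card ∈ e.cycleType := by
  rw [cycleType_def]
  exact Multiset.mem_map_of_mem _ (Finset.mem_val.mpr (cycleOf_mem_cycleFactorsFinset_iff.2 (mem_support.2 he)))

lemma hat_eq (e : Perm (Fin k)) :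
    Equiv.Perm.decomposeFin.symm (0, e)
      = e.extendDomain (finSuccAboveEquiv (0 : Fin (k + 1))) := by
  ext i
  refine Fin.cases ?_ (fun i => ?_) i
  · rw [Equiv.Perm.decomposeFin_symm_apply_zero,
      Perm.extendDomain_apply_not_subtype _ _ (by simp)]
  · have hco : ((finSuccAboveEquiv (0 : Fin (k + 1))) i : Fin (k + 1)) = i.succ := by
      simp [finSuccAboveEquiv_apply, Fin.zero_succAbove]
    rw [Equiv.Perm.decomposeFin_symm_apply_succ, ← hco, Perm.extendDomain_apply_image]
    simp [finSuccAboveEquiv_apply, Fin.zero_succAbove]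

lemma dF_swap (p : Fin (k + 1)) (e : Perm (Fin k)) :
    Equiv.Perm.decomposeFin.symm (p, e)
      = swap 0 p * Equiv.Perm.decomposeFin.symm (0, e) := by
  ext i
  refine Fin.cases ?_ (fun i => ?_) i
  · simp
  · simp

lemma hat_zero (e : Perm (Fin k)) : Equiv.Perm.decomposeFin.symm (0, e) 0 = 0 := by simp

lemma hat_cycleType (e : Perm (Fin k)) :
    (Equiv.Perm.decomposeFin.symm (0, e) : Perm (Fin (k + 1))).cycleType = e.cycleType := by
  rw [hat_eq, cycleType_extendDomain]

lemma sum_cycleType_le (e : Perm (Fin k)) : e.cycleType.sum ≤ k := by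
  rw [sum_cycleType]
  simpa using Finset.card_le_card (Finset.subset_univ e.support)

lemma hat_cycleCount (e : Perm (Fin k)) :
    cycleCount (Equiv.Perm.decomposeFin.symm (0, e) : Perm (Fin (k + 1)))
      = cycleCount e + 1 := by
  have h := _root_.sum_cycleType_le e
  rw [cycleCount, cycleCount, hat_cycleType]
  simp only [Fintype.card_fin]
  omega

lemma K2 (e : Perm (Fin k)) (j : Fin k) :
    (Equiv.Perm.decomposeFin.symm (j.succ, e) : Perm (Fin (k + 1))).cycleType
      = (Lfun e j + 1) ::ₘ (e.cycleType.erase (Lfun e j)) ∧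
    ((Equiv.Perm.decomposeFin.symm (j.succ, e) : Perm (Fin (k + 1))).cycleOf 0).support.card
      = Lfun e j + 1 := by
  set ehat := (Equiv.Perm.decomposeFin.symm (0, e) : Perm (Fin (k + 1))) with hehat
  have h0 : ehat 0 = 0 := hat_zero e
  have hsucc : ehat j.succ = (e j).succ := by simp [hehat]
  have hswap : Equiv.Perm.decomposeFin.symm (j.succ, e) = swap 0 j.succ * ehat := dF_swap _ _
  by_cases he : e j = j
  · have hfix : ehat j.succ = j.succ := by rw [hsucc, he]
    obtain ⟨h1, h2⟩ := ins_fix h0 hfix (Fin.succ_ne_zero j)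
    have hL : Lfun e j = 1 := if_pos he
    have herase : e.cycleType.erase 1 = e.cycleType :=
      Multiset.erase_of_notMem (fun hmem => by
        have := two_le_of_mem_cycleType hmem; omega)
    rw [hswap, hL, herase, h1, hat_cycleType]
    exact ⟨rfl, h2⟩
  · have hfix : ehat j.succ ≠ j.succ := by
      rw [hsucc]; exact fun hh => he (Fin.succ_injective _ hh)
    obtain ⟨h1, h2⟩ := ins_main h0 hfix
    have hLhat : (ehat.cycleOf j.succ).support.card = (e.cycleOf j).support.card := by
      have hco : ((finSuccAboveEquiv (0 : Fin (k + 1))) j : Fin (k + 1)) = j.succ := by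
        simp [finSuccAboveEquiv_apply, Fin.zero_succAbove]
      rw [hehat, hat_eq, ← hco, myCycleOf_extendDomain, myCard_support_extendDomain]
    have hL : Lfun e j = (e.cycleOf j).support.card := if_neg he
    rw [hswap, h1, h2, hLhat, hL, hat_cycleType]
    exact ⟨rfl, rfl⟩

lemma K1 (e : Perm (Fin k)) (j : Fin k) :
    cycleCount (Equiv.Perm.decomposeFin.symm (j.succ, e) : Perm (Fin (k + 1)))
      = cycleCount e := by
  have hK2 := (K2 e j).1
  rw [cycleCount, cycleCount, hK2]
  simp only [Multiset.card_cons, Fintype.card_fin]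
  by_cases he : e j = j
  · have hL : Lfun e j = 1 := if_pos he
    have herase : e.cycleType.erase 1 = e.cycleType :=
      Multiset.erase_of_notMem (fun hmem => by
        have := two_le_of_mem_cycleType hmem; omega)
    have hsle : e.cycleType.sum ≤ k - 1 := by
      rw [sum_cycleType]
      have hsub : e.support ⊆ Finset.univ.erase j := by
        intro y hy
        refine Finset.mem_erase.2 ⟨?_, Finset.mem_univ _⟩
        rintro rfl; exact (mem_support.1 hy) he
      have := Finset.card_le_card hsub
      rwa [Finset.card_erase_of_mem (Finset.mem_univ _), Finset.card_univ, Fintype.card_fin]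
        at this
    have hk : 1 ≤ k := by
      rcases Nat.eq_zero_or_pos k with rfl | h
      · exact absurd j.2 (by omega)
      · exact h
    rw [hL, herase]
    simp only [Multiset.sum_cons]
    omega
  · have hL : Lfun e j = (e.cycleOf j).support.card := if_neg he
    have hmem : Lfun e j ∈ e.cycleType := hL ▸ Lmem he
    have hcons := Multiset.cons_erase hmem
    have hcard : Multiset.card e.cycleType = Multiset.card (e.cycleType.erase (Lfun e j)) + 1 := by
      conv_lhs => rw [← hcons]
      simp
    have hsum : e.cycleType.sum = Lfun e j + (e.cycleType.erase (Lfun e j)).sum := by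
      conv_lhs => rw [← hcons]
      simp
    have hle := _root_.sum_cycleType_le e
    simp only [Multiset.sum_cons]
    omega

end FinBridge

section Counting

/-- all-odd-cycle permutations with given cycle count (as an integer). -/
def QQ {m : ℕ} (T : ℤ) (σ : Perm (Fin m)) : Prop :=
  (∀ l ∈ σ.cycleType, Odd l) ∧ (cycleCount σ : ℤ) = T

/-- marked permutations: the cycle of the mark becomes odd after insertion,
all other cycles odd, given cycle count. -/
def RR {m : ℕ} (T : ℤ) (e : Perm (Fin m)) (j : Fin m) : Prop :=
  Odd (Lfun e j + 1) ∧ (∀ l ∈ e.cycleType.erase (Lfun e j), Odd l) ∧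
    (cycleCount e : ℤ) = T

noncomputable def OC (m : ℕ) (T : ℤ) : ℕ := Nat.card {σ : Perm (Fin m) // QQ T σ}

noncomputable def RC (m : ℕ) (T : ℤ) : ℕ :=
  Nat.card {e : Perm (Fin (m + 1)) // RR T e 0}

variable {k : ℕ} {T : ℤ}

lemma step1_zero (e : Perm (Fin k)) :
    QQ T (Equiv.Perm.decomposeFin.symm (0, e)) ↔ QQ (T - 1) e := by
  unfold QQ
  rw [hat_cycleType, hat_cycleCount]
  constructor
  · rintro ⟨h1, h2⟩; exact ⟨h1, by push_cast at h2 ⊢; omega⟩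
  · rintro ⟨h1, h2⟩; exact ⟨h1, by push_cast; omega⟩

lemma step1_succ (e : Perm (Fin k)) (j : Fin k) :
    QQ T (Equiv.Perm.decomposeFin.symm (j.succ, e)) ↔ RR T e j := by
  unfold QQ RR
  rw [(K2 e j).1, K1]
  constructor
  · rintro ⟨h1, h2⟩
    exact ⟨h1 _ (Multiset.mem_cons_self _ _), fun l hl => h1 _ (Multiset.mem_cons_of_mem hl), h2⟩
  · rintro ⟨h1, h2, h3⟩
    refine ⟨fun l hl => ?_, h3⟩
    rcases Multiset.mem_cons.1 hl with rfl | hl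
    · exact h1
    · exact h2 _ hl

lemma conj_RR (φ : Perm (Fin k)) (e : Perm (Fin k)) (j : Fin k) :
    RR T (φ * e * φ⁻¹) (φ j) ↔ RR T e j := by
  have happ : (φ * e * φ⁻¹) (φ j) = φ (e j) := by simp [Perm.mul_apply]
  have hfixiff : (φ * e * φ⁻¹) (φ j) = φ j ↔ e j = j := by
    rw [happ]; exact φ.injective.eq_iff
  have hLfun : Lfun (φ * e * φ⁻¹) (φ j) = Lfun e j := by
    unfold Lfun
    by_cases he : e j = j
    · rw [if_pos (hfixiff.2 he), if_pos he]
    · rw [if_neg (fun h => he (hfixiff.1 h)), if_neg he, myCycleOf_conj, support_conj]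
      simp
  have hct : (φ * e * φ⁻¹).cycleType = e.cycleType := cycleType_conj
  have hcc : cycleCount (φ * e * φ⁻¹) = cycleCount e := by
    unfold cycleCount; rw [hct]
  unfold RR
  rw [hLfun, hct, hcc]

lemma RC_eq (j : Fin (k + 1)) :
    Nat.card {e : Perm (Fin (k + 1)) // RR T e j} = RC k T := by
  set φ : Perm (Fin (k + 1)) := swap j 0 with hφ
  have hφj : φ j = 0 := by simp [hφ]
  rw [RC]
  refine Nat.card_congr (Equiv.subtypeEquiv ((MulAut.conj φ).toEquiv) fun e => ?_)
  have h1 : (MulAut.conj φ).toEquiv e = φ * e * φ⁻¹ := rfl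
  rw [h1, ← hφj, conj_RR]

end Counting

section Steps

variable {k : ℕ} {T : ℤ}

lemma step2_zero (ρ : Perm (Fin k)) : ¬ RR T (Equiv.Perm.decomposeFin.symm (0, ρ)) 0 := by
  intro ⟨h1, _, _⟩
  have h0 : (Equiv.Perm.decomposeFin.symm (0, ρ) : Perm (Fin (k + 1))) 0 = 0 := hat_zero ρ
  rw [Lfun, if_pos h0, Nat.odd_iff] at h1
  omega

lemma step2_succ (ρ : Perm (Fin k)) (i : Fin k) :
    RR T (Equiv.Perm.decomposeFin.symm (i.succ, ρ)) 0 ↔ QQ T ρ := by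
  set e := (Equiv.Perm.decomposeFin.symm (i.succ, ρ) : Perm (Fin (k + 1))) with he
  have he0 : e 0 = i.succ := by simp [he]
  have he0' : e 0 ≠ 0 := by rw [he0]; exact Fin.succ_ne_zero i
  have hLe : Lfun e 0 = Lfun ρ i + 1 := by rw [Lfun, if_neg he0']; exact (K2 ρ i).2
  have hct : e.cycleType = (Lfun ρ i + 1) ::ₘ ρ.cycleType.erase (Lfun ρ i) := (K2 ρ i).1
  have hcc : cycleCount e = cycleCount ρ := K1 ρ i
  rw [RR, QQ, hLe, hct, Multiset.erase_cons_head, hcc]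
  have hodd : Odd (Lfun ρ i + 1 + 1) ↔ Odd (Lfun ρ i) := by
    rw [Nat.odd_iff, Nat.odd_iff]; omega
  rw [hodd]
  by_cases hfix : ρ i = i
  · have hL : Lfun ρ i = 1 := if_pos hfix
    have her : ρ.cycleType.erase 1 = ρ.cycleType :=
      Multiset.erase_of_notMem (fun hmem => by have := two_le_of_mem_cycleType hmem; omega)
    rw [hL, her]
    simp [Nat.odd_iff]
  · have hL : Lfun ρ i = (ρ.cycleOf i).support.card := if_neg hfix
    have hmem : Lfun ρ i ∈ ρ.cycleType := hL ▸ Lmem hfix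
    constructor
    · rintro ⟨h1, h2, h3⟩
      refine ⟨fun l hl => ?_, h3⟩
      have hl2 : l ∈ Lfun ρ i ::ₘ ρ.cycleType.erase (Lfun ρ i) := by
        rw [Multiset.cons_erase hmem]; exact hl
      rcases Multiset.mem_cons.1 hl2 with rfl | hl'
      · exact h1
      · exact h2 _ hl'
    · rintro ⟨h1, h3⟩
      exact ⟨h1 _ hmem, fun l hl => h1 _ (Multiset.mem_of_mem_erase hl), h3⟩

lemma lemA (l : ℕ) (T : ℤ) :
    OC (l + 2) T = OC (l + 1) (T - 1) + (l + 1) * RC l T := by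
  have e1 : {σ : Perm (Fin (l + 2)) // QQ T σ} ≃
      {pe : Fin (l + 2) × Perm (Fin (l + 1)) // QQ T (Equiv.Perm.decomposeFin.symm pe)} :=
    Equiv.subtypeEquiv Equiv.Perm.decomposeFin (fun σ => by simp)
  have e2 : {pe : Fin (l + 2) × Perm (Fin (l + 1)) // QQ T (Equiv.Perm.decomposeFin.symm pe)} ≃
      Σ p : Fin (l + 2), {e : Perm (Fin (l + 1)) // QQ T (Equiv.Perm.decomposeFin.symm (p, e))} :=
    Equiv.subtypeProdEquivSigmaSubtype
      (fun (a : Fin (l + 2)) (b : Perm (Fin (l + 1))) => QQ T (Equiv.Perm.decomposeFin.symm (a, b)))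
  rw [OC, Nat.card_congr (e1.trans e2), myCard_sigma, Fin.sum_univ_succ]
  congr 1
  · rw [OC]
    exact Nat.card_congr (Equiv.subtypeEquiv (Equiv.refl _) (fun e => step1_zero e))
  · have hterm : ∀ j : Fin (l + 1),
        Nat.card {e : Perm (Fin (l + 1)) // QQ T (Equiv.Perm.decomposeFin.symm (j.succ, e))}
          = RC l T := by
      intro j
      rw [← RC_eq j]
      exact Nat.card_congr (Equiv.subtypeEquiv (Equiv.refl _) (fun e => step1_succ e j))
    simp only [hterm]
    rw [Finset.sum_const, Finset.card_univ, Fintype.card_fin, smul_eq_mul]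

lemma lemB (k : ℕ) (T : ℤ) : RC k T = k * OC k T := by
  have e1 : {e : Perm (Fin (k + 1)) // RR T e 0} ≃
      {pe : Fin (k + 1) × Perm (Fin k) // RR T (Equiv.Perm.decomposeFin.symm pe) 0} :=
    Equiv.subtypeEquiv Equiv.Perm.decomposeFin (fun σ => by simp)
  have e2 : {pe : Fin (k + 1) × Perm (Fin k) // RR T (Equiv.Perm.decomposeFin.symm pe) 0} ≃
      Σ q : Fin (k + 1), {ρ : Perm (Fin k) // RR T (Equiv.Perm.decomposeFin.symm (q, ρ)) 0} :=
    Equiv.subtypeProdEquivSigmaSubtype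
      (fun (a : Fin (k + 1)) (b : Perm (Fin k)) => RR T (Equiv.Perm.decomposeFin.symm (a, b)) 0)
  rw [RC, Nat.card_congr (e1.trans e2), myCard_sigma, Fin.sum_univ_succ]
  have hzero :
      Nat.card {ρ : Perm (Fin k) // RR T (Equiv.Perm.decomposeFin.symm (0, ρ)) 0} = 0 :=
    @Nat.card_of_isEmpty _ ⟨fun x => step2_zero x.1 x.2⟩
  have hterm : ∀ i : Fin k,
      Nat.card {ρ : Perm (Fin k) // RR T (Equiv.Perm.decomposeFin.symm (i.succ, ρ)) 0}
        = OC k T := by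
    intro i
    rw [OC]
    exact Nat.card_congr (Equiv.subtypeEquiv (Equiv.refl _) (fun ρ => step2_succ ρ i))
  simp only [hterm, hzero]
  rw [Finset.sum_const, Finset.card_univ, Fintype.card_fin, smul_eq_mul, zero_add]

lemma OC_rec (l : ℕ) (T : ℤ) :
    OC (l + 3) T = OC (l + 2) (T - 1) + (l + 2) * (l + 1) * OC (l + 1) T := by
  rw [show l + 3 = (l + 1) + 2 from rfl, lemA (l + 1) T, lemB (l + 1) T]
  ring

end Steps

lemma key_rec (m : ℕ) (g : ℤ) :
    oddCyclePermCount (m + 3) g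
      = oddCyclePermCount (m + 2) g + (m + 2) * (m + 1) * oddCyclePermCount (m + 1) (g - 1) := by
  have hO : ∀ (M : ℕ) (gg : ℤ), oddCyclePermCount M gg = OC M ((M : ℤ) - 2 * gg) :=
    fun M gg => rfl
  rw [hO, hO, hO]
  have h1 : ((m + 2 : ℕ) : ℤ) - 2 * g = ((m + 3 : ℕ) : ℤ) - 2 * g - 1 := by push_cast; ring
  have h2 : ((m + 1 : ℕ) : ℤ) - 2 * (g - 1) = ((m + 3 : ℕ) : ℤ) - 2 * g := by push_cast; ring
  rw [h1, h2, OC_rec m]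

/-- The Harer–Zagier recurrence
`(n+1)A(n,g) = 2(2n-1)A(n-1,g) + (2n-1)(n-1)(2n-3)A(n-2,g-1)`. -/
theorem stmt4 (n : ℕ) (hn : 2 ≤ n) (g : ℤ) :
    ((n : ℚ) + 1) * Amap n g =
      2 * (2 * (n : ℚ) - 1) * Amap (n - 1) g +
        (2 * (n : ℚ) - 1) * ((n : ℚ) - 1) * (2 * (n : ℚ) - 3) * Amap (n - 2) (g - 1) := by
  obtain ⟨m, rfl⟩ : ∃ m, n = m + 2 := ⟨n - 2, by omega⟩
  have hs1 : m + 2 - 1 = m + 1 := by omega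
  have hs2 : m + 2 - 2 = m := by omega
  rw [hs1, hs2]
  have hkey := key_rec m g
  have hkeyQ : (oddCyclePermCount (m + 3) g : ℚ)
      = (oddCyclePermCount (m + 2) g : ℚ)
        + ((m : ℚ) + 2) * ((m : ℚ) + 1) * (oddCyclePermCount (m + 1) (g - 1) : ℚ) := by
    rw [hkey]; push_cast; ring
  unfold Amap
  have hidx1 : m + 2 + 1 = m + 3 := rfl
  have hidx2 : m + 1 + 1 = m + 2 := rfl
  have hidx3 : m + 0 + 1 = m + 1 := rfl
  rw [hidx1, hidx2]
  set X : ℚ := (2 : ℚ) ^ (2 * g) with hX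
  have hX0 : X ≠ 0 := zpow_ne_zero _ (by norm_num)
  have hXg : (2 : ℚ) ^ (2 * (g - 1)) = X / 4 := by
    rw [hX, show 2 * (g - 1) = 2 * g - 2 by ring, zpow_sub₀ (by norm_num : (2:ℚ) ≠ 0)]
    norm_num
  rw [hXg, hkeyQ]
  -- factorial expansions
  have hf1 : ((m + 1).factorial : ℚ) = ((m : ℚ) + 1) * (m.factorial : ℚ) := by
    rw [Nat.factorial_succ]; push_cast; ring
  have hf2 : ((m + 2).factorial : ℚ)
      = ((m : ℚ) + 2) * ((m : ℚ) + 1) * (m.factorial : ℚ) := by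
    rw [show m + 2 = (m + 1) + 1 from rfl, Nat.factorial_succ, Nat.factorial_succ]
    push_cast; ring
  have hf3 : ((m + 3).factorial : ℚ)
      = ((m : ℚ) + 3) * ((m : ℚ) + 2) * ((m : ℚ) + 1) * (m.factorial : ℚ) := by
    rw [show m + 3 = (m + 2) + 1 from rfl, Nat.factorial_succ]
    push_cast
    rw [hf2]; ring
  have hg1 : ((2 * (m + 1)).factorial : ℚ)
      = (2 * (m : ℚ) + 2) * (2 * (m : ℚ) + 1) * ((2 * m).factorial : ℚ) := by
    rw [show 2 * (m + 1) = (2 * m + 1) + 1 by ring, Nat.factorial_succ, Nat.factorial_succ]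
    push_cast; ring
  have hg2 : ((2 * (m + 2)).factorial : ℚ)
      = (2 * (m : ℚ) + 4) * (2 * (m : ℚ) + 3) * (2 * (m : ℚ) + 2) * (2 * (m : ℚ) + 1)
          * ((2 * m).factorial : ℚ) := by
    rw [show 2 * (m + 2) = (2 * m + 3) + 1 by ring, Nat.factorial_succ,
      show 2 * m + 3 = (2 * m + 2) + 1 from rfl, Nat.factorial_succ,
      show 2 * m + 2 = (2 * m + 1) + 1 from rfl, Nat.factorial_succ, Nat.factorial_succ]
    push_cast; ring
  have hm0 : (m.factorial : ℚ) ≠ 0 := Nat.cast_ne_zero.2 (Nat.factorial_ne_zero m)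
  have hm2 : ((2 * m).factorial : ℚ) ≠ 0 := Nat.cast_ne_zero.2 (Nat.factorial_ne_zero _)
  rw [hf1, hf2, hf3, hg1, hg2]
  push_cast
  field_simp
  ring
end

section
/- The polynomial A_n(x) := ((2n)!/(2^n n!(n+1)!)) · ∑_{k=0}^{n} C(n,k)·(x+n-k)_{n+1} satisfies A_n(-x) = (-1)^{n+1} A_n(x); in particular A_n is an odd polynomial when n is even and an even polynomial when n is odd. -/
open Finset Polynomial

lemma key_prod (n k : ℕ) (hk : k ≤ n) :
    (∏ i ∈ Finset.range (n + 1), (X + C ((n : ℚ) - (k : ℚ) - (i : ℚ)))).comp (-X)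
      = (-1 : ℚ) ^ (n + 1) •
        ∏ i ∈ Finset.range (n + 1),
          (X + C ((n : ℚ) - ((n - k : ℕ) : ℚ) - (i : ℚ))) := by
  rw [Polynomial.prod_comp]
  have h1 : ∀ i ∈ Finset.range (n + 1),
      (X + C ((n : ℚ) - (k : ℚ) - (i : ℚ))).comp (-X)
        = C (-1 : ℚ) * (X + C (-((n : ℚ) - (k : ℚ)) + (i : ℚ))) := by
    intro i _
    rw [Polynomial.add_comp, Polynomial.X_comp, Polynomial.C_comp, map_neg, map_one,
      neg_one_mul, neg_add, ← C_neg]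
    congr 2
    ring_nf
  rw [Finset.prod_congr rfl h1, Finset.prod_mul_distrib, Finset.prod_const,
    Finset.card_range, Polynomial.smul_eq_C_mul, map_pow]
  congr 1
  -- reflect the product
  have := Finset.prod_range_reflect
    (fun j => (X + C (-((n : ℚ) - (k : ℚ)) + (j : ℚ)) : Polynomial ℚ)) (n + 1)
  rw [← this]
  refine Finset.prod_congr rfl ?_
  intro j hj
  rw [Finset.mem_range, Nat.lt_succ_iff] at hj
  congr 1
  have h3 : ((n + 1 - 1 - j : ℕ) : ℚ) = (n : ℚ) - (j : ℚ) := by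
    have h : n + 1 - 1 - j = n - j := rfl
    rw [h, Nat.cast_sub hj]
  have h4 : ((n - k : ℕ) : ℚ) = (n : ℚ) - (k : ℚ) := Nat.cast_sub hk
  rw [h3, h4]
  ring_nf

/-- The polynomial `A_n(x) = ((2n)!/(2^n n!(n+1)!))·∑_k C(n,k)(x+n-k)_{n+1}`
satisfies `A_n(-x) = (-1)^(n+1)·A_n(x)`. -/
theorem stmt6 (n : ℕ) :
    letI P : Polynomial ℚ :=
      (((2 * n).factorial : ℚ) / (2 ^ n * (n.factorial : ℚ) * ((n + 1).factorial : ℚ))) •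
        ∑ k ∈ Finset.range (n + 1), (n.choose k : ℚ) •
          ∏ i ∈ Finset.range (n + 1), (X + C ((n : ℚ) - (k : ℚ) - (i : ℚ)))
    P.comp (-X) = (-1 : ℚ) ^ (n + 1) • P := by
  show ((((2 * n).factorial : ℚ) / (2 ^ n * (n.factorial : ℚ) * ((n + 1).factorial : ℚ))) •
        ∑ k ∈ Finset.range (n + 1), (n.choose k : ℚ) •
          ∏ i ∈ Finset.range (n + 1), (X + C ((n : ℚ) - (k : ℚ) - (i : ℚ)))).comp (-X)
      = (-1 : ℚ) ^ (n + 1) •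
        ((((2 * n).factorial : ℚ) / (2 ^ n * (n.factorial : ℚ) * ((n + 1).factorial : ℚ))) •
        ∑ k ∈ Finset.range (n + 1), (n.choose k : ℚ) •
          ∏ i ∈ Finset.range (n + 1), (X + C ((n : ℚ) - (k : ℚ) - (i : ℚ))))
  have hterm : ∀ k ∈ Finset.range (n + 1),
      ((n.choose k : ℚ) • ∏ i ∈ Finset.range (n + 1),
          (X + C ((n : ℚ) - (k : ℚ) - (i : ℚ)))).comp (-X)
        = (-1 : ℚ) ^ (n + 1) • ((n.choose (n - k) : ℚ) •
            ∏ i ∈ Finset.range (n + 1),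
              (X + C ((n : ℚ) - ((n - k : ℕ) : ℚ) - (i : ℚ)))) := by
    intro k hk
    rw [Finset.mem_range, Nat.lt_succ_iff] at hk
    rw [Polynomial.smul_comp, key_prod n k hk, Nat.choose_symm hk, smul_comm]
  rw [Polynomial.smul_comp, Polynomial.sum_comp, Finset.sum_congr rfl hterm,
    ← Finset.smul_sum, smul_comm]
  congr 2
  have := Finset.sum_range_reflect
    (fun j => ((n.choose j : ℚ) • ∏ i ∈ Finset.range (n + 1),
      (X + C ((n : ℚ) - ((j : ℕ) : ℚ) - (i : ℚ))) : Polynomial ℚ)) (n + 1)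
  simp only [Nat.add_sub_cancel] at this
  exact this
end

section
/- Let a_0,…,a_n be complex numbers with a_0 ≠ 0, a_n ≠ 0, satisfying a_1/a_0 = a_{n-1}/a_n and k·a_k + (n-k+2)·a_{k-2} = (a_1/a_0)·a_{k-1} for all 2 ≤ k ≤ n. Define F(x) = ∑_{k=0}^{n} a_k·(x+n-k)(x+n-k-1)⋯(x-k). Then (n+2+a_1/a_0)·F(x) = x·(F(x+1) - F(x-1)) as polynomials in x. -/
open Finset Polynomial


noncomputable def PP (n : ℕ) (c : ℂ) : Polynomial ℂ :=
  ∏ i ∈ Finset.range (n + 1), (X + C (c - (i : ℂ)))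


lemma PP_comp_add (n : ℕ) (c : ℂ) : (PP n c).comp (X + 1) = PP n (c + 1) := by
  unfold PP
  rw [Polynomial.prod_comp]
  refine Finset.prod_congr rfl fun i _ => ?_
  simp only [add_comp, sub_comp, X_comp, C_comp, one_comp, map_add, map_sub, map_one]
  ring

lemma PP_comp_sub (n : ℕ) (c : ℂ) : (PP n c).comp (X - 1) = PP n (c - 1) := by
  unfold PP
  rw [Polynomial.prod_comp]
  refine Finset.prod_congr rfl fun i _ => ?_
  simp only [add_comp, sub_comp, X_comp, C_comp, one_comp, map_add, map_sub, map_one]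
  ring

lemma PP_key (n : ℕ) (c : ℂ) :
    (X + C (c + 1)) * PP n c = (X + C (c - n)) * PP n (c + 1) := by
  unfold PP
  rw [Finset.prod_range_succ, Finset.prod_range_succ']
  have h : ∀ i ∈ Finset.range n, (X + C (c + 1 - ((i + 1 : ℕ) : ℂ))) = X + C (c - i) := by
    intro i _
    push_cast
    ring_nf
  rw [Finset.prod_congr rfl h]
  push_cast
  simp only [map_add, map_sub, map_one, map_natCast, sub_zero]
  ring

lemma PP_X_mul (n : ℕ) (c : ℂ) :
    X * (PP n (c + 1) - PP n (c - 1)) =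
      C ((n : ℂ) + 2) * PP n c + C ((n : ℂ) - c) * PP n (c + 1) + C c * PP n (c - 1) := by
  have h1 := PP_key n c
  have h2 := PP_key n (c - 1)
  rw [sub_add_cancel] at h2
  simp only [map_add, map_sub, map_one, map_natCast, map_ofNat] at h1 h2 ⊢
  linear_combination (-1 : ℂ[X]) * h1 - h2

lemma sum_step (m : ℕ) (a : ℕ → ℂ) (r : ℂ) (p : ℂ → Polynomial ℂ)
    (h0 : a 1 = r * a 0) (hn : a m = r * a (m + 1))
    (hmid : ∀ j < m, ((j : ℂ) + 2) * a (j + 2) + ((m : ℂ) + 1 - j) * a j = r * a (j + 1)) :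
    (∑ k ∈ Finset.range (m + 1 + 1), C ((k : ℂ) * a k) * p (((m : ℂ) + 1) - k + 1))
      + ∑ k ∈ Finset.range (m + 1 + 1), C (((m : ℂ) + 1 - k) * a k) * p (((m : ℂ) + 1) - k - 1)
    = ∑ k ∈ Finset.range (m + 1 + 1), C (r * a k) * p (((m : ℂ) + 1) - k) := by
  rw [Finset.sum_range_succ' _ (m + 1), Finset.sum_range_succ' _ m]
  rw [Finset.sum_range_succ (fun k => C (((m : ℂ) + 1 - k) * a k) * p (((m : ℂ) + 1) - k - 1)),
    Finset.sum_range_succ (fun k => C (((m : ℂ) + 1 - k) * a k) * p (((m : ℂ) + 1) - k - 1))]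
  rw [Finset.sum_range_succ (fun k => C (r * a k) * p (((m : ℂ) + 1) - k)),
    Finset.sum_range_succ' (fun k => C (r * a k) * p (((m : ℂ) + 1) - k)) m]
  push_cast
  simp only [zero_mul, map_zero, zero_mul, sub_self, Nat.cast_zero, sub_zero, add_sub_cancel_left]
  have harg : (m : ℂ) + 1 - 1 + 1 = (m : ℂ) + 1 := by ring
  rw [harg, one_mul, one_mul, h0, hn, add_zero, add_zero]
  have hsum : (∑ x ∈ Finset.range m, C (((x : ℂ) + 1 + 1) * a (x + 1 + 1)) * p ((m : ℂ) + 1 - ((x : ℂ) + 1 + 1) + 1))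
      + ∑ x ∈ Finset.range m, C (((m : ℂ) + 1 - x) * a x) * p ((m : ℂ) + 1 - x - 1)
      = ∑ x ∈ Finset.range m, C (r * a (x + 1)) * p ((m : ℂ) + 1 - ((x : ℂ) + 1)) := by
    rw [← Finset.sum_add_distrib]
    refine Finset.sum_congr rfl fun j hj => ?_
    have hj' := Finset.mem_range.mp hj
    have a1 : (m : ℂ) + 1 - ((j : ℂ) + 1 + 1) + 1 = (m : ℂ) - j := by ring
    have a2 : (m : ℂ) + 1 - (j : ℂ) - 1 = (m : ℂ) - j := by ring
    have a3 : (m : ℂ) + 1 - ((j : ℂ) + 1) = (m : ℂ) - j := by ring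
    have a4 : ((j : ℂ) + 1 + 1) = (j : ℂ) + 2 := by ring
    rw [a1, a2, a3, a4, show j + 1 + 1 = j + 2 from rfl, ← add_mul, ← C_add,
      hmid j hj']
  linear_combination hsum

/-- If `a_0,…,a_n ∈ ℂ` with `a_0 ≠ 0 ≠ a_n` satisfy `a_1/a_0 = a_{n-1}/a_n` and
`k·a_k + (n-k+2)·a_{k-2} = (a_1/a_0)·a_{k-1}` for `2 ≤ k ≤ n`, then
`F(x) = ∑_k a_k (x+n-k)_{n+1}` satisfies
`(n+2+a_1/a_0)·F(x) = x·(F(x+1) - F(x-1))`. -/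
theorem stmt8 (n : ℕ) (hn : 1 ≤ n) (a : ℕ → ℂ) (h0 : a 0 ≠ 0) (hne : a n ≠ 0)
    (hratio : a 1 / a 0 = a (n - 1) / a n)
    (hrec : ∀ k, 2 ≤ k → k ≤ n →
      (k : ℂ) * a k + ((n : ℂ) - (k : ℂ) + 2) * a (k - 2) = (a 1 / a 0) * a (k - 1)) :
    letI F : Polynomial ℂ :=
      ∑ k ∈ Finset.range (n + 1), a k •
        ∏ i ∈ Finset.range (n + 1), (X + C ((n : ℂ) - (k : ℂ) - (i : ℂ)))
    C ((n : ℂ) + 2 + a 1 / a 0) * F = X * (F.comp (X + 1) - F.comp (X - 1)) := by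
  obtain ⟨m, rfl⟩ : ∃ m, n = m + 1 := ⟨n - 1, (Nat.succ_pred_eq_of_pos hn).symm⟩
  set r := a 1 / a 0 with hr
  show C (((m + 1 : ℕ) : ℂ) + 2 + r) *
      (∑ k ∈ Finset.range (m + 1 + 1), a k • PP (m + 1) (((m + 1 : ℕ) : ℂ) - k))
    = X * ((∑ k ∈ Finset.range (m + 1 + 1), a k • PP (m + 1) (((m + 1 : ℕ) : ℂ) - k)).comp (X + 1)
        - (∑ k ∈ Finset.range (m + 1 + 1), a k • PP (m + 1) (((m + 1 : ℕ) : ℂ) - k)).comp (X - 1))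
  have hc1 : (∑ k ∈ Finset.range (m + 1 + 1), a k • PP (m + 1) (((m + 1 : ℕ) : ℂ) - k)).comp (X + 1)
      = ∑ k ∈ Finset.range (m + 1 + 1), a k • PP (m + 1) (((m + 1 : ℕ) : ℂ) - k + 1) := by
    rw [Polynomial.sum_comp]
    exact Finset.sum_congr rfl fun k _ => by rw [Polynomial.smul_comp, PP_comp_add]
  have hc2 : (∑ k ∈ Finset.range (m + 1 + 1), a k • PP (m + 1) (((m + 1 : ℕ) : ℂ) - k)).comp (X - 1)
      = ∑ k ∈ Finset.range (m + 1 + 1), a k • PP (m + 1) (((m + 1 : ℕ) : ℂ) - k - 1) := by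
    rw [Polynomial.sum_comp]
    exact Finset.sum_congr rfl fun k _ => by rw [Polynomial.smul_comp, PP_comp_sub]
  rw [hc1, hc2]
  simp only [Polynomial.smul_eq_C_mul]
  rw [← Finset.sum_sub_distrib, Finset.mul_sum _ _ X]
  have hterm : ∀ k ∈ Finset.range (m + 1 + 1),
      X * (C (a k) * PP (m + 1) (((m + 1 : ℕ) : ℂ) - k + 1)
            - C (a k) * PP (m + 1) (((m + 1 : ℕ) : ℂ) - k - 1))
      = C (((m + 1 : ℕ) : ℂ) + 2) * (C (a k) * PP (m + 1) (((m + 1 : ℕ) : ℂ) - k))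
        + C ((k : ℂ) * a k) * PP (m + 1) (((m + 1 : ℕ) : ℂ) - k + 1)
        + C ((((m + 1 : ℕ) : ℂ) - k) * a k) * PP (m + 1) (((m + 1 : ℕ) : ℂ) - k - 1) := by
    intro k _
    have h := PP_X_mul (m + 1) (((m + 1 : ℕ) : ℂ) - k)
    have e : ((m + 1 : ℕ) : ℂ) - (((m + 1 : ℕ) : ℂ) - k) = (k : ℂ) := by ring
    rw [e] at h
    calc X * (C (a k) * PP (m + 1) (((m + 1 : ℕ) : ℂ) - k + 1)
            - C (a k) * PP (m + 1) (((m + 1 : ℕ) : ℂ) - k - 1))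
        = C (a k) * (X * (PP (m + 1) (((m + 1 : ℕ) : ℂ) - k + 1)
            - PP (m + 1) (((m + 1 : ℕ) : ℂ) - k - 1))) := by ring
      _ = _ := by rw [h]; simp only [C_mul]; ring
  rw [Finset.sum_congr rfl hterm, Finset.sum_add_distrib, Finset.sum_add_distrib, map_add,
    add_mul, Finset.mul_sum _ _ (C (((m + 1 : ℕ) : ℂ) + 2)), Finset.mul_sum _ _ (C r)]
  have h0' : a 1 = r * a 0 := by rw [hr]; field_simp
  have hn' : a m = r * a (m + 1) := by
    rw [hratio]; simp only [Nat.add_sub_cancel]; field_simp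
  have hmid : ∀ j < m, ((j : ℂ) + 2) * a (j + 2) + ((m : ℂ) + 1 - j) * a j = r * a (j + 1) := by
    intro j hj
    have h := hrec (j + 2) (by omega) (by omega)
    have e1 : j + 2 - 2 = j := by omega
    have e2 : j + 2 - 1 = j + 1 := by omega
    rw [e1, e2] at h
    push_cast at h ⊢
    linear_combination h
  have hs := sum_step m a r (PP (m + 1)) h0' hn' hmid
  have hC : ∀ k ∈ Finset.range (m + 1 + 1),
      C r * (C (a k) * PP (m + 1) (((m + 1 : ℕ) : ℂ) - k))
        = C (r * a k) * PP (m + 1) (((m + 1 : ℕ) : ℂ) - k) := by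
    intro k _; rw [C_mul]; ring
  rw [Finset.sum_congr rfl hC]
  push_cast
  push_cast at hs
  linear_combination -hs
end

section
/- Let F(x) = ∑_{k≥0} b_k x^k be a polynomial satisfying c·F(x) = x·(F(x+1) - F(x-1)) for some constant c. Then for every k ≥ 0, (c/2 - k)·b_k = ∑_{j≥1} C(k+2j, 2j+1)·b_{k+2j}. -/
open Finset Polynomial

private lemma sum_odd_pair (f : ℕ → ℚ) (n : ℕ) :
    ∑ i ∈ range (2 * n), f i * (1 - (-1 : ℚ) ^ i) = 2 * ∑ j ∈ range n, f (2 * j + 1) := by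
  induction n with
  | zero => simp
  | succ n ih =>
    have h2 : 2 * (n + 1) = (2 * n + 1) + 1 := by ring
    have he : (-1 : ℚ) ^ (2 * n) = 1 := by simp [pow_mul]
    have ho : (-1 : ℚ) ^ (2 * n + 1) = -1 := by rw [pow_succ, he]; ring
    rw [h2, Finset.sum_range_succ, Finset.sum_range_succ, Finset.sum_range_succ, ih, ho, he]
    ring

/-- If a polynomial `F(x) = ∑ b_k x^k` satisfies `c·F(x) = x·(F(x+1) - F(x-1))`, then
`(c/2 - k)·b_k = ∑_{j ≥ 1} C(k+2j, 2j+1)·b_{k+2j}` for all `k`. -/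
theorem stmt9 (F : Polynomial ℚ) (c : ℚ)
    (h : C c * F = X * (F.comp (X + 1) - F.comp (X - 1))) (k : ℕ) :
    (c / 2 - (k : ℚ)) * F.coeff k =
      ∑ j ∈ Finset.Icc 1 F.natDegree,
        ((k + 2 * j).choose (2 * j + 1) : ℚ) * F.coeff (k + 2 * j) := by
  set d := F.natDegree with hd
  have e1 : F.comp (X + 1) = Polynomial.taylor (1 : ℚ) F := by
    rw [Polynomial.taylor_apply, map_one]
  have e2 : F.comp (X - 1) = Polynomial.taylor (-1 : ℚ) F := by
    rw [Polynomial.taylor_apply, map_neg, map_one, sub_eq_add_neg]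
  cases k with
  | zero =>
    have h0 := congrArg (fun p => Polynomial.coeff p 0) h
    simp [Polynomial.coeff_C_mul, Polynomial.mul_coeff_zero] at h0
    have : ∑ j ∈ Finset.Icc 1 d, (((0:ℕ) + 2 * j).choose (2 * j + 1) : ℚ) * F.coeff (0 + 2 * j) = 0 := by
      apply Finset.sum_eq_zero
      intro j hj
      have : (0 + 2 * j).choose (2 * j + 1) = 0 := Nat.choose_eq_zero_of_lt (by omega)
      simp [this]
    rw [this]
    rcases h0 with h0 | h0 <;> simp [h0]
  | succ m =>
    have hcoeff := congrArg (fun p => Polynomial.coeff p (m + 1)) h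
    simp only [Polynomial.coeff_C_mul, Polynomial.coeff_X_mul, Polynomial.coeff_sub,
      e1, e2, Polynomial.taylor_coeff] at hcoeff
    -- hcoeff : c * F.coeff (m+1) = (hasseDeriv m F).eval 1 - (hasseDeriv m F).eval (-1)
    have hdeg : (Polynomial.hasseDeriv m F).natDegree < 2 * (d + 1) := by
      have := Polynomial.natDegree_hasseDeriv_le F m
      omega
    rw [Polynomial.eval_eq_sum_range' hdeg, Polynomial.eval_eq_sum_range' hdeg,
      ← Finset.sum_sub_distrib] at hcoeff
    have hstep : ∀ i ∈ range (2 * (d + 1)),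
        (Polynomial.hasseDeriv m F).coeff i * (1:ℚ) ^ i - (Polynomial.hasseDeriv m F).coeff i * (-1:ℚ) ^ i
        = (((i + m).choose m : ℚ) * F.coeff (i + m)) * (1 - (-1:ℚ) ^ i) := by
      intro i _
      rw [Polynomial.hasseDeriv_coeff]
      ring
    rw [Finset.sum_congr rfl hstep, sum_odd_pair (fun i => ((i + m).choose m : ℚ) * F.coeff (i + m)) (d + 1)] at hcoeff
    -- now hcoeff : c * F.coeff (m+1) = 2 * ∑ j ∈ range (d+1), C(2j+1+m, m) * F.coeff (2j+1+m)
    rw [Finset.sum_range_succ'] at hcoeff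
    -- j = 0 term: C(1+m, m) * F.coeff (1+m)
    have hsum : ∑ j ∈ Finset.Icc 1 d, (((m+1) + 2 * j).choose (2 * j + 1) : ℚ) * F.coeff ((m+1) + 2 * j)
        = ∑ i ∈ range d, ((2 * (i + 1) + 1 + m).choose m : ℚ) * F.coeff (2 * (i + 1) + 1 + m) := by
      rw [← Finset.Ico_add_one_right_eq_Icc, Finset.sum_Ico_eq_sum_range]
      apply Finset.sum_congr (by norm_num)
      intro i _
      have hidx : (m + 1) + 2 * (1 + i) = 2 * (i + 1) + 1 + m := by ring
      rw [hidx, show 2 * (1 + i) + 1 = (2 * (i + 1) + 1 + m) - m from by omega,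
        Nat.choose_symm (by omega)]
    rw [hsum]
    have hc1 : (2 * 0 + 1 + m) = m + 1 := by omega
    rw [hc1] at hcoeff
    push_cast at hcoeff ⊢
    have hch0 : ((m + 1).choose m : ℚ) = (m : ℚ) + 1 := by
      rw [← Nat.choose_symm (by omega)]
      simp
    rw [hch0] at hcoeff
    linarith [hcoeff]
end

section
/- The polynomial F_n(x) = (1+E)^n (x+n)_{n+1}, where E is the backward shift operator f(x) ↦ f(x-1), satisfies (2n+2)·F_n(x) = x·(F_n(x+1) - F_n(x-1)). -/
open Finset Polynomial

/-- The backward shift operator `E : f(x) ↦ f(x-1)` on polynomials. -/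
noncomputable def shiftE : Polynomial ℚ →ₗ[ℚ] Polynomial ℚ where
  toFun f := f.comp (X - 1)
  map_add' f g := add_comp
  map_smul' c f := by simp [smul_comp]


noncomputable def ff (m : ℚ) (d : ℕ) : Polynomial ℚ :=
  ∏ i ∈ Finset.range d, (X + C (m - (i : ℚ)))

lemma ff_top (m : ℚ) (d : ℕ) : ff m (d+1) = (X + C m) * ff (m-1) d := by
  unfold ff
  rw [Finset.prod_range_succ']
  rw [mul_comm]
  congr 1
  · simp
  · apply Finset.prod_congr rfl
    intro i _
    push_cast
    ring_nf

lemma ff_bot (m : ℚ) (d : ℕ) : ff m (d+1) = ff m d * (X + C (m - d)) := by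
  unfold ff; rw [Finset.prod_range_succ]

lemma ff_diff (m : ℚ) (d : ℕ) :
    ff (m+1) (d+1) - ff m (d+1) = C ((d:ℚ)+1) * ff m d := by
  have h1 := ff_top (m+1) d
  simp only [add_sub_cancel_right] at h1
  rw [h1, ff_bot]
  rw [show (C ((d:ℚ)+1) : Polynomial ℚ) = C ((m:ℚ)+1) - C (m - d) by rw [← C_sub]; ring_nf]
  ring

lemma ff_comp_add (m : ℚ) (d : ℕ) : (ff m d).comp (X + 1) = ff (m+1) d := by
  unfold ff
  rw [Polynomial.prod_comp]
  apply Finset.prod_congr rfl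
  intro i _
  simp [add_comp]
  ring

lemma ff_comp_sub (m : ℚ) (d : ℕ) : (ff m d).comp (X - 1) = ff (m-1) d := by
  unfold ff
  rw [Polynomial.prod_comp]
  apply Finset.prod_congr rfl
  intro i _
  simp [sub_comp, add_comp]
  ring

lemma shiftE_ff (m : ℚ) (d : ℕ) : shiftE (ff m d) = ff (m-1) d := by
  show (ff m d).comp (X - 1) = _
  exact ff_comp_sub m d

lemma shiftE_pow_ff (k : ℕ) (m : ℚ) (d : ℕ) :
    (shiftE ^ k) (ff m d) = ff (m - k) d := by
  induction k generalizing m with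
  | zero => simp
  | succ k ih =>
    rw [pow_succ, Module.End.mul_apply, shiftE_ff]
    rw [ih (m-1)]
    congr 1
    push_cast
    ring

lemma expandE (n : ℕ) (P : Polynomial ℚ) :
    ((1 + shiftE) ^ n) P = ∑ k ∈ Finset.range (n+1), (n.choose k : ℚ) • (shiftE ^ k) P := by
  rw [add_comm, (Commute.one_right shiftE).add_pow]
  simp only [one_pow, mul_one, LinearMap.sum_apply, Module.End.mul_apply,
    Module.End.natCast_apply, map_nsmul, Nat.cast_smul_eq_nsmul]

lemma sum_comp' (s : Finset ℕ) (f : ℕ → Polynomial ℚ) (q : Polynomial ℚ) :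
    (∑ k ∈ s, f k).comp q = ∑ k ∈ s, (f k).comp q := by
  simp [Polynomial.comp, Polynomial.eval₂_finset_sum]

lemma term_id (n k : ℕ) (c : ℚ) :
    C (2*(n:ℚ)+2) * (c • ff ((n:ℚ)-k) (n+1))
      - X * (c • ff ((n:ℚ)-k+1) (n+1) - c • ff ((n:ℚ)-k-1) (n+1))
    = C ((n:ℚ)+1) * ((c * ((n:ℚ)-k)) • ff ((n:ℚ)-k-1) n - (c * k) • ff ((n:ℚ)-k) n) := by
  have h1 := ff_diff ((n:ℚ)-k) n
  have h2 := ff_diff ((n:ℚ)-k-1) n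
  rw [show (n:ℚ)-k-1+1 = (n:ℚ)-k by ring] at h2
  have h3 := ff_bot ((n:ℚ)-k) n
  have h4 := ff_top ((n:ℚ)-k) n
  simp only [smul_eq_C_mul, map_sub, map_add, map_mul, map_one, map_ofNat] at h1 h2 h3 h4 ⊢
  linear_combination (-(C c * X)) * h1 + (-(C c * X)) * h2
    + (C c * (C (n:ℚ) + 1)) * h3 + (C c * (C (n:ℚ) + 1)) * h4

lemma key (n : ℕ) :
    ∑ k ∈ Finset.range (n+1), ((n.choose k : ℚ) * k) • ff ((n:ℚ)-k) n
    = ∑ k ∈ Finset.range (n+1), ((n.choose k : ℚ) * ((n:ℚ)-k)) • ff ((n:ℚ)-k-1) n := by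
  rw [Finset.sum_range_succ' _ n, Finset.sum_range_succ]
  simp only [Nat.cast_zero, mul_zero, zero_smul, add_zero, Nat.choose_self,
    sub_self, Nat.cast_one, sub_zero]
  apply Finset.sum_congr rfl
  intro j hj
  have hj' : j < n := Finset.mem_range.mp hj
  have hcq : ((n.choose (j+1) * (j+1) : ℕ) : ℚ) = ((n.choose j * (n - j) : ℕ) : ℚ) := by
    exact_mod_cast congrArg (Nat.cast (R := ℚ)) (Nat.choose_succ_right_eq n j)
  push_cast [Nat.cast_sub hj'.le] at hcq
  rw [show (n:ℚ) - ((j:ℕ)+1:ℕ) = (n:ℚ) - j - 1 by push_cast; ring]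
  rw [show ((((j:ℕ)+1:ℕ)):ℚ) = (j:ℚ)+1 by push_cast; ring, hcq]


/-- The polynomial `F_n(x) = (1+E)^n (x+n)_{n+1}` satisfies
`(2n+2)·F_n(x) = x·(F_n(x+1) - F_n(x-1))`. -/
theorem stmt10 (n : ℕ) :
    letI F : Polynomial ℚ :=
      ((1 + shiftE) ^ n) (∏ i ∈ Finset.range (n + 1), (X + C ((n : ℚ) - (i : ℚ))))
    C (2 * (n : ℚ) + 2) * F = X * (F.comp (X + 1) - F.comp (X - 1)) := by
  set F : Polynomial ℚ :=
    ((1 + shiftE) ^ n) (∏ i ∈ Finset.range (n + 1), (X + C ((n : ℚ) - (i : ℚ)))) with hFd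
  have hF : F = ∑ k ∈ Finset.range (n+1), (n.choose k : ℚ) • ff ((n:ℚ) - k) (n+1) := by
    rw [hFd]
    show ((1 + shiftE) ^ n) (ff (n:ℚ) (n+1)) = _
    rw [expandE]
    exact Finset.sum_congr rfl fun k _ => by rw [shiftE_pow_ff]
  have hc1 : F.comp (X + 1) = ∑ k ∈ Finset.range (n+1),
      (n.choose k : ℚ) • ff ((n:ℚ) - k + 1) (n+1) := by
    rw [hF, sum_comp']
    exact Finset.sum_congr rfl fun k _ => by rw [smul_comp, ff_comp_add]
  have hc2 : F.comp (X - 1) = ∑ k ∈ Finset.range (n+1),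
      (n.choose k : ℚ) • ff ((n:ℚ) - k - 1) (n+1) := by
    rw [hF, sum_comp']
    exact Finset.sum_congr rfl fun k _ => by rw [smul_comp, ff_comp_sub]
  rw [hc1, hc2, hF, ← Finset.sum_sub_distrib, Finset.mul_sum, Finset.mul_sum,
    ← sub_eq_zero, ← Finset.sum_sub_distrib]
  have ht : ∀ k ∈ Finset.range (n+1),
      C (2*(n:ℚ)+2) * ((n.choose k : ℚ) • ff ((n:ℚ)-k) (n+1))
        - X * ((n.choose k : ℚ) • ff ((n:ℚ)-k+1) (n+1)
            - (n.choose k : ℚ) • ff ((n:ℚ)-k-1) (n+1))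
      = C ((n:ℚ)+1) * (((n.choose k : ℚ) * ((n:ℚ)-k)) • ff ((n:ℚ)-k-1) n
          - ((n.choose k : ℚ) * k) • ff ((n:ℚ)-k) n) := fun k _ => term_id n k _
  rw [Finset.sum_congr rfl ht, ← Finset.mul_sum, Finset.sum_sub_distrib, ← key n,
    sub_self, mul_zero]
end

section
/- Let P(x) = (1-E²)^n (x+2n)_{2n+1} where E is the backward shift operator f(x) ↦ f(x-1) and (x+2n)_{2n+1} = (x+2n)(x+2n-1)⋯x. Then P is a polynomial of degree n+1 (even though each summand has degree 2n+1). -/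
open Finset Polynomial

lemma stepA (f : Polynomial ℚ) (hd : 0 < f.natDegree) :
    (f - f.comp (X - C 2)).natDegree = f.natDegree - 1 ∧
    (f - f.comp (X - C 2)).coeff (f.natDegree - 1)
      = 2 * (f.natDegree : ℚ) * f.leadingCoeff := by
  set d := f.natDegree with hdef
  have hlc : f.leadingCoeff ≠ 0 := Polynomial.leadingCoeff_ne_zero.mpr (by
    intro h0
    rw [hdef, h0] at hd
    simp at hd)
  have hdq : (d : ℚ) ≠ 0 := Nat.cast_ne_zero.mpr (by omega)
  have hcomp : f.comp (X - C 2) = taylor (-2) f := by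
    rw [taylor_apply, map_neg, sub_eq_add_neg]
  have hdeg0 : (hasseDeriv d f).natDegree < 1 := by
    have := natDegree_hasseDeriv_le f d
    omega
  have hdeg1 : (hasseDeriv (d-1) f).natDegree < 2 := by
    have := natDegree_hasseDeriv_le f (d-1)
    omega
  have hcd : (f - f.comp (X - C 2)).coeff d = 0 := by
    rw [coeff_sub, hcomp, taylor_coeff, eval_eq_sum_range' hdeg0]
    simp [hasseDeriv_coeff]
  have hcd1 : (f - f.comp (X - C 2)).coeff (d-1) = 2 * (d : ℚ) * f.leadingCoeff := by
    rw [coeff_sub, hcomp, taylor_coeff, eval_eq_sum_range' hdeg1]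
    rw [Finset.sum_range_succ, Finset.sum_range_one]
    have h1 : 1 + (d - 1) = d := by omega
    simp only [hasseDeriv_coeff, h1, Nat.zero_add, Nat.choose_self, Nat.cast_one, one_mul,
      pow_zero, pow_one, mul_one]
    have h3 : ((d.choose (d-1) : ℚ)) = d := by
      rw [Nat.choose_symm (show 1 ≤ d by omega), Nat.choose_one_right]
    rw [h3, Polynomial.leadingCoeff, ← hdef]
    ring
  have hval : (2 : ℚ) * (d : ℚ) * f.leadingCoeff ≠ 0 :=
    mul_ne_zero (mul_ne_zero two_ne_zero hdq) hlc
  have hne : f - f.comp (X - C 2) ≠ 0 := by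
    intro h
    rw [h, Polynomial.coeff_zero] at hcd1
    exact hval hcd1.symm
  have hle : (f - f.comp (X - C 2)).natDegree ≤ d := by
    apply le_trans (Polynomial.natDegree_sub_le _ _)
    simp [hcomp, Polynomial.natDegree_taylor]
    omega
  have hlt : (f - f.comp (X - C 2)).natDegree < d := by
    rcases lt_or_eq_of_le hle with h | h
    · exact h
    · exfalso
      have := Polynomial.leadingCoeff_ne_zero.mpr hne
      rw [Polynomial.leadingCoeff, h] at this
      exact this hcd
  have hge : d - 1 ≤ (f - f.comp (X - C 2)).natDegree := by
    apply Polynomial.le_natDegree_of_ne_zero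
    rw [hcd1]
    exact hval
  exact ⟨by omega, hcd1⟩

lemma opA (f : Polynomial ℚ) :
    ((1 - (shiftE : Module.End ℚ (Polynomial ℚ)) ^ 2 : Module.End ℚ (Polynomial ℚ)) f)
      = f - f.comp (X - C 2) := by
  have h2 : (((shiftE : Module.End ℚ (Polynomial ℚ)) ^ 2 : Module.End ℚ (Polynomial ℚ))) f
      = f.comp (X - C 2) := by
    rw [sq, Module.End.mul_apply]
    simp only [shiftE, LinearMap.coe_mk, AddHom.coe_mk]
    rw [Polynomial.comp_assoc]
    congr 1
    have hC : (C (2:ℚ)) = 2 := by exact_mod_cast map_ofNat C 2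
    simp [sub_comp, hC]
    ring
  rw [LinearMap.sub_apply, Module.End.one_apply, h2]

lemma iterA (n : ℕ) : ∀ f : Polynomial ℚ, n ≤ f.natDegree →
    ((((1 - (shiftE : Module.End ℚ (Polynomial ℚ)) ^ 2) ^ n : Module.End ℚ (Polynomial ℚ))) f).natDegree
      = f.natDegree - n := by
  induction n with
  | zero => simp
  | succ n ih =>
    intro f hf
    have hstep := stepA f (by omega)
    have hrw : (((1 - (shiftE : Module.End ℚ (Polynomial ℚ)) ^ 2) ^ (n+1) : Module.End ℚ (Polynomial ℚ))) f
        = (((1 - (shiftE : Module.End ℚ (Polynomial ℚ)) ^ 2) ^ n : Module.End ℚ (Polynomial ℚ)))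
          ((1 - (shiftE : Module.End ℚ (Polynomial ℚ)) ^ 2 : Module.End ℚ (Polynomial ℚ)) f) := by
      rw [pow_succ, Module.End.mul_apply]
    rw [hrw, opA, ih _ (by rw [hstep.1]; omega), hstep.1]
    omega

/-- `P(x) = (1-E²)^n (x+2n)_{2n+1}` is a polynomial of degree `n+1`. -/
theorem stmt19 (n : ℕ) :
    ((((1 - (shiftE : Module.End ℚ (Polynomial ℚ)) ^ 2) ^ n : Module.End ℚ (Polynomial ℚ))
      (∏ i ∈ Finset.range (2 * n + 1), (X + C ((2 * (n : ℚ)) - (i : ℚ)))))).natDegree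
    = n + 1 := by
  have hdF : (∏ i ∈ Finset.range (2 * n + 1), (X + C ((2 * (n : ℚ)) - (i : ℚ)))).natDegree
      = 2 * n + 1 := by
    rw [Polynomial.natDegree_prod _ _ (fun i _ => (Polynomial.monic_X_add_C _).ne_zero)]
    rw [Finset.sum_congr rfl (fun i _ => Polynomial.natDegree_X_add_C _)]
    simp
  rw [iterA n _ (by omega), hdF]
  omega
end
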